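/- arXiv:2305.07808 — 6 statements merged into one kernel-verified Lean document; each statement's English description precedes it below -/
import Mathlib

section
/- Let S be a collection of nonempty finite sets each of cardinality 2 or 3. In the conflict graph G_S, every induced 3-claw is centered at a vertex corresponding to a set of cardinality 3. Equivalently, a vertex corresponding to a 2-element set has at most 2 pairwise non-adjacent neighbors. -/
/-- Let `S` be a collection of nonempty finite sets, each of cardinality
2 or 3. In the conflict graph of `S`, every induced 3-claw is centered at a set of
cardinality 3; equivalently, a 2-element set has no 3 pairwise non-adjacent neighbors. -/
theorem conflict_graph_three_claw_center {α : Type*} [DecidableEq α]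
    (S : Finset (Finset α))
    (hcard : ∀ s ∈ S, s.card = 2 ∨ s.card = 3) :
    ¬ ∃ c ∈ S, c.card = 2 ∧ ∃ T : Finset (Finset α), T ⊆ S ∧ T.card = 3 ∧ c ∉ T ∧
      (∀ t ∈ T, (t ∩ c).Nonempty) ∧
      (∀ t₁ ∈ T, ∀ t₂ ∈ T, t₁ ≠ t₂ → ¬ (t₁ ∩ t₂).Nonempty) := by
  classical
  rintro ⟨c, hcS, hc2, T, hTS, hT3, hcT, hhit, hdisj⟩
  have hcne : c.Nonempty := Finset.card_pos.mp (by rw [hc2]; norm_num)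
  obtain ⟨a₀, ha₀⟩ := hcne
  have hlt : c.card < T.card := by rw [hc2, hT3]; norm_num
  let f : Finset α → α := fun t => if h : t ∈ T then (hhit t h).choose else a₀
  have hmaps : ∀ t ∈ T, f t ∈ c := by
    intro t ht
    simp only [f, dif_pos ht]
    exact (Finset.mem_inter.mp (hhit t ht).choose_spec).2
  obtain ⟨t₁, ht₁, t₂, ht₂, hne, heq⟩ :=
    Finset.exists_ne_map_eq_of_card_lt_of_maps_to hlt hmaps
  apply hdisj t₁ ht₁ t₂ ht₂ hne
  refine ⟨f t₁, Finset.mem_inter.mpr ⟨?_, ?_⟩⟩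
  · simp only [f, dif_pos ht₁]
    exact (Finset.mem_inter.mp (hhit t₁ ht₁).choose_spec).1
  · rw [heq]
    simp only [f, dif_pos ht₂]
    exact (Finset.mem_inter.mp (hhit t₂ ht₂).choose_spec).1
end

section
/- Let B be a minimal binocular in a multigraph G. Then either (a) there exist (not necessarily distinct) vertices u, v, cycles C_u through u and C_v through v of positive length, and a u-v-path P such that E(B) is the disjoint union of E(C_u), E(C_v), and E(P); or (b) there exist two distinct vertices u and v such that E(B) is the union of the edge sets of three pairwise edge-disjoint u-v-paths. -/
/-- A multigraph on vertex type `V` with edge type `E`. -/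
structure Multigraph (V E : Type*) where
  ends : E → Sym2 V

namespace Multigraph

variable {V E : Type*}

def IsSubgraph (G : Multigraph V E) (S : Finset V) (F : Finset E) : Prop :=
  ∀ e ∈ F, ∀ v ∈ G.ends e, v ∈ S

def IsBinocular (G : Multigraph V E) (S : Finset V) (F : Finset E) : Prop :=
  G.IsSubgraph S F ∧ S.card < F.card

def IsMinimalBinocular (G : Multigraph V E) (S : Finset V) (F : Finset E) : Prop :=
  G.IsBinocular S F ∧
    ∀ S' F', S' ⊆ S → F' ⊆ F → G.IsBinocular S' F' → S' = S ∧ F' = F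

/-- A walk from `u` to `v`, given by its vertex sequence and edge sequence. -/
structure Walk (G : Multigraph V E) (u v : V) where
  verts : List V
  edges : List E
  len_eq : verts.length = edges.length + 1
  head_eq : verts.head? = some u
  last_eq : verts.getLast? = some v
  valid : ∀ i (h : i < edges.length),
    G.ends (edges[i]'h) = s(verts[i]'(by omega), verts[i + 1]'(by omega))

/-- A walk is a (vertex-simple) path if its vertices are pairwise distinct. -/
def Walk.IsPath {G : Multigraph V E} {u v : V} (p : G.Walk u v) : Prop :=
  p.verts.Nodup

/-- A closed walk is a cycle (of positive length) if it is nonempty and all its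
vertices except the repeated endpoint are pairwise distinct.  This includes loops
(length 1) and pairs of parallel edges (length 2). -/
def Walk.IsCycle {G : Multigraph V E} {u : V} (c : G.Walk u u) : Prop :=
  c.edges ≠ [] ∧ c.verts.dropLast.Nodup

end Multigraph

set_option linter.unusedSectionVars false
set_option linter.unnecessarySeqFocus false
set_option maxHeartbeats 1600000

namespace Multigraph
variable {V E : Type*}

variable [DecidableEq V] [DecidableEq E]

/-- multiplicity of `v` in a `Sym2`. -/
def cnt (v : V) (s : Sym2 V) : ℕ :=
  Sym2.lift ⟨fun a b => (if a = v then 1 else 0) + (if b = v then 1 else 0),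
    fun a b => by simp [Nat.add_comm]⟩ s

lemma cnt_mk (v a b : V) :
    cnt v s(a, b) = (if a = v then 1 else 0) + (if b = v then 1 else 0) := rfl

lemma cnt_pos_iff (v : V) (s : Sym2 V) : 0 < cnt v s ↔ v ∈ s := by
  induction s using Sym2.ind with
  | _ a b =>
    rw [cnt_mk, Sym2.mem_iff]
    by_cases ha : a = v <;> by_cases hb : b = v <;>
      simp [ha, hb, eq_comm] <;> tauto

lemma cnt_eq_zero {v : V} {s : Sym2 V} (h : v ∉ s) : cnt v s = 0 := by
  by_contra hc
  exact h ((cnt_pos_iff v s).1 (Nat.pos_of_ne_zero hc))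

lemma one_le_cnt {v : V} {s : Sym2 V} (h : v ∈ s) : 1 ≤ cnt v s :=
  (cnt_pos_iff v s).2 h

lemma cnt_loop (v : V) : cnt v s(v, v) = 2 := by simp [cnt_mk]

lemma cnt_ne {v a b : V} (ha : a ≠ v) (hb : b ≠ v) : cnt v s(a, b) = 0 := by
  simp [cnt_mk, ha, hb]

lemma cnt_left {v b : V} (hb : b ≠ v) : cnt v s(v, b) = 1 := by
  simp [cnt_mk, hb]

/-- degree of `v` with respect to an edge set `F`. -/
def deg (G : Multigraph V E) (F : Finset E) (v : V) : ℕ :=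
  ∑ e ∈ F, cnt v (G.ends e)

lemma deg_mono (G : Multigraph V E) {F F' : Finset E} (h : F ⊆ F') (v : V) :
    G.deg F v ≤ G.deg F' v :=
  Finset.sum_le_sum_of_subset h

lemma deg_erase (G : Multigraph V E) {F : Finset E} {e : E} (he : e ∈ F) (v : V) :
    G.deg (F.erase e) v + cnt v (G.ends e) = G.deg F v :=
  Finset.sum_erase_add _ _ he

lemma deg_sdiff (G : Multigraph V E) {F A : Finset E} (h : A ⊆ F) (v : V) :
    G.deg (F \ A) v + G.deg A v = G.deg F v :=
  Finset.sum_sdiff h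

lemma exists_edge (G : Multigraph V E) {F : Finset E} {v : V} (h : 0 < G.deg F v) :
    ∃ e ∈ F, v ∈ G.ends e := by
  by_contra hc
  push_neg at hc
  have : G.deg F v = 0 := Finset.sum_eq_zero fun e he => cnt_eq_zero (hc e he)
  omega

lemma cnt_le_deg (G : Multigraph V E) {F : Finset E} {e : E} (he : e ∈ F) (v : V) :
    cnt v (G.ends e) ≤ G.deg F v :=
  Finset.single_le_sum (f := fun e => cnt v (G.ends e)) (fun _ _ => Nat.zero_le _) he

lemma two_cnt_le_deg (G : Multigraph V E) {F : Finset E} {e e' : E} (he : e ∈ F)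
    (he' : e' ∈ F) (hne : e ≠ e') (v : V) :
    cnt v (G.ends e) + cnt v (G.ends e') ≤ G.deg F v := by
  have : ∑ f ∈ ({e, e'} : Finset E), cnt v (G.ends f) ≤ G.deg F v :=
    Finset.sum_le_sum_of_subset (by intro f hf; simp at hf; rcases hf with rfl | rfl <;> assumption)
  rwa [Finset.sum_pair hne] at this

namespace Walk

variable {G : Multigraph V E} {u v w : V}

lemma verts_ne_nil (p : G.Walk u v) : p.verts ≠ [] := by
  have := p.len_eq; intro h; rw [h] at this; simp at this

lemma verts_head (p : G.Walk u v) : p.verts.head p.verts_ne_nil = u := by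
  have := p.head_eq
  rwa [List.head?_eq_head p.verts_ne_nil, Option.some_inj] at this

lemma verts_getLast (p : G.Walk u v) : p.verts.getLast p.verts_ne_nil = v := by
  have := p.last_eq
  rwa [List.getLast?_eq_getLast p.verts_ne_nil, Option.some_inj] at this

lemma head_mem_verts (p : G.Walk u v) : u ∈ p.verts := by
  have := List.head_mem p.verts_ne_nil
  rwa [p.verts_head] at this

lemma last_mem_verts (p : G.Walk u v) : v ∈ p.verts := by
  have := List.getLast_mem p.verts_ne_nil
  rwa [p.verts_getLast] at this

def nil (G : Multigraph V E) (v : V) : G.Walk v v where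
  verts := [v]
  edges := []
  len_eq := rfl
  head_eq := rfl
  last_eq := rfl
  valid := fun i h => by simp at h

def cons (e : E) (h : G.ends e = s(u, w)) (p : G.Walk w v) : G.Walk u v where
  verts := u :: p.verts
  edges := e :: p.edges
  len_eq := by simp [p.len_eq]
  head_eq := rfl
  last_eq := by
    rw [List.getLast?_cons, ← p.last_eq]
    cases hv : p.verts with
    | nil => exact absurd hv p.verts_ne_nil
    | cons a l => simp [List.getLast?_cons]
  valid := by
    intro i hi
    match i with
    | 0 =>
      have hlen : 0 < p.verts.length := by have := p.len_eq; omega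
      have h0 : p.verts[0]'hlen = w := by
        rw [List.getElem_zero]; exact p.verts_head
      simp only [List.getElem_cons_zero, List.getElem_cons_succ]
      rw [h, h0]
    | Nat.succ j =>
      simp only [List.getElem_cons_succ]
      exact p.valid j (by simpa using hi)

@[simp] lemma cons_verts (e : E) (h : G.ends e = s(u, w)) (p : G.Walk w v) :
    (cons e h p).verts = u :: p.verts := rfl

@[simp] lemma cons_edges (e : E) (h : G.ends e = s(u, w)) (p : G.Walk w v) :
    (cons e h p).edges = e :: p.edges := rfl

@[simp] lemma nil_verts (v : V) : (nil G v).verts = [v] := rfl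
@[simp] lemma nil_edges (v : V) : (nil G v).edges = ([] : List E) := rfl

end Walk

variable {G : Multigraph V E}

lemma dropLast_cons_of_ne_nil {α : Type*} (a : α) {l : List α} (h : l ≠ []) :
    (a :: l).dropLast = a :: l.dropLast := by
  cases l with
  | nil => exact absurd rfl h
  | cons b t => rfl

lemma Walk.mem_verts_cases {u v w : V} (p : G.Walk u v) (h : w ∈ p.verts) :
    w ∈ p.verts.dropLast ∨ w = v := by
  have hd : p.verts.dropLast ++ [v] = p.verts := by
    have := List.dropLast_append_getLast p.verts_ne_nil
    rwa [p.verts_getLast] at this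
  rw [← hd] at h
  rcases List.mem_append.1 h with h | h
  · exact Or.inl h
  · simp at h; exact Or.inr h

lemma segment (G : Multigraph V E) (D : Finset V) :
    ∀ n (F : Finset E), F.card ≤ n → ∀ y, y ∉ D → G.deg F y = 1 →
    (∀ w, w ∉ D → w ≠ y → G.deg F w = 0 ∨ G.deg F w = 2) →
    ∃ z ∈ D, ∃ p : G.Walk y z,
      p.verts.Nodup ∧ p.edges ≠ [] ∧ p.edges.Nodup ∧ p.edges.toFinset ⊆ F ∧
      (∀ w ∈ p.verts.dropLast, w ∉ D ∧ 0 < G.deg F w) ∧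
      (∀ w, w ∉ D → G.deg (F \ p.edges.toFinset) w = 0 ∨ G.deg (F \ p.edges.toFinset) w = 2) ∧
      (∀ w ∈ D, w ≠ z → G.deg (F \ p.edges.toFinset) w = G.deg F w) ∧
      (G.deg (F \ p.edges.toFinset) z + 1 = G.deg F z) := by
  intro n
  induction n with
  | zero =>
    intro F hF y _ hdeg _
    have hF0 : F = ∅ := Finset.card_eq_zero.1 (Nat.le_zero.1 hF)
    subst hF0
    simp [deg] at hdeg
  | succ n ih =>
    intro F hF y hyD hdeg hreg
    obtain ⟨e, heF, hye⟩ := G.exists_edge (F := F) (v := y) (by omega)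
    obtain ⟨b, hb⟩ := Sym2.mem_iff_exists.1 hye
    have hby : b ≠ y := by
      rintro rfl
      have := G.cnt_le_deg heF b
      rw [hb, cnt_loop] at this
      omega
    have hcnty : cnt y (G.ends e) = 1 := by rw [hb]; exact cnt_left hby
    have hcntb : cnt b (G.ends e) = 1 := by
      rw [hb, Sym2.eq_swap]; exact cnt_left hby.symm
    set F' := F.erase e with hF'
    have hdy' : G.deg F' y = 0 := by
      have := G.deg_erase heF y; rw [← hF'] at this; omega
    have hdegF'card : F'.card ≤ n := by
      have h1 := Finset.card_erase_of_mem heF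
      have h2 : 0 < F.card := Finset.card_pos.2 ⟨e, heF⟩
      rw [← hF'] at h1; omega
    have hother : ∀ w, w ≠ y → w ≠ b → G.deg F' w = G.deg F w := by
      intro w hw1 hw2
      have hc : cnt w (G.ends e) = 0 := by
        rw [hb]; exact cnt_ne (Ne.symm hw1) (Ne.symm hw2)
      have := G.deg_erase heF w; rw [← hF'] at this; omega
    by_cases hbD : b ∈ D
    · -- base case: one edge walk
      refine ⟨b, hbD, Walk.cons e hb (Walk.nil G b), ?_⟩
      have hFe : ((Walk.cons e hb (Walk.nil G b)).edges).toFinset = {e} := by simp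
      have hsd : F \ ({e} : Finset E) = F' := by
        rw [hF', Finset.erase_eq]
      refine ⟨by simp [hby.symm, Ne.symm hby], by simp, by simp, ?_, ?_, ?_, ?_, ?_⟩
      · rw [hFe]; simpa using heF
      · intro w hw
        simp [Walk.cons, Walk.nil] at hw
        subst hw
        exact ⟨hyD, by omega⟩
      · intro w hwD
        rw [hFe, hsd]
        by_cases hwy : w = y
        · subst hwy; left; exact hdy'
        · rw [hother w hwy (by rintro rfl; exact hwD hbD)]
          exact hreg w hwD hwy
      · intro w hwD hwb
        rw [hFe, hsd]
        exact hother w (by rintro rfl; exact hyD hwD) hwb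
      · rw [hFe, hsd]
        have := G.deg_erase heF b; rw [← hF'] at this; omega
    · -- recursive case
      have hbpos : 0 < G.deg F b := by
        have := G.cnt_le_deg heF b; omega
      have hdb : G.deg F b = 2 := by
        rcases hreg b hbD hby with h0 | h2
        · omega
        · exact h2
      have hdb' : G.deg F' b = 1 := by
        have := G.deg_erase heF b; rw [← hF'] at this; omega
      have hreg' : ∀ w, w ∉ D → w ≠ b → G.deg F' w = 0 ∨ G.deg F' w = 2 := by
        intro w hwD hwb
        by_cases hwy : w = y
        · subst hwy; left; exact hdy'
        · rw [hother w hwy hwb]; exact hreg w hwD hwy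
      obtain ⟨z, hzD, p', hp'nodup, hp'ne, hp'enodup, hp'sub, hp'drop, hp'reg, hp'D, hp'z⟩ :=
        ih F' hdegF'card b hbD hdb' hreg'
      have hyp' : y ∉ p'.verts := by
        intro hy
        rcases p'.mem_verts_cases hy with hy | rfl
        · exact absurd hdy' (by have := (hp'drop y hy).2; omega)
        · exact hyD hzD
      have hep' : e ∉ p'.edges := by
        intro hme
        have := hp'sub (List.mem_toFinset.2 hme)
        exact Finset.notMem_erase e F this
      set p := Walk.cons e hb p' with hp
      have hsd : F \ p.edges.toFinset = F' \ p'.edges.toFinset := by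
        ext f
        simp only [hp, Walk.cons_edges, List.toFinset_cons, Finset.mem_sdiff,
          Finset.mem_insert, hF', Finset.mem_erase, List.mem_toFinset]
        constructor
        · rintro ⟨hfF, hf⟩
          push_neg at hf
          exact ⟨⟨hf.1, hfF⟩, by simpa using hf.2⟩
        · rintro ⟨⟨hfe, hfF⟩, hf⟩
          exact ⟨hfF, by push_neg; exact ⟨hfe, by simpa using hf⟩⟩
      refine ⟨z, hzD, p, ?_, by simp [hp], ?_, ?_, ?_, ?_, ?_, ?_⟩
      · rw [hp]; simp only [Walk.cons_verts, List.nodup_cons]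
        exact ⟨hyp', hp'nodup⟩
      · rw [hp]; simp only [Walk.cons_edges, List.nodup_cons]
        exact ⟨hep', hp'enodup⟩
      · rw [hp]; simp only [Walk.cons_edges, List.toFinset_cons]
        intro f hf
        rcases Finset.mem_insert.1 hf with rfl | hf
        · exact heF
        · exact Finset.erase_subset e F (hp'sub hf)
      · rw [hp]; simp only [Walk.cons_verts]
        rw [dropLast_cons_of_ne_nil _ p'.verts_ne_nil]
        intro w hw
        rcases List.mem_cons.1 hw with rfl | hw
        · exact ⟨hyD, by omega⟩
        · obtain ⟨h1, h2⟩ := hp'drop w hw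
          exact ⟨h1, lt_of_lt_of_le h2 (G.deg_mono (Finset.erase_subset e F) w)⟩
      · intro w hwD
        rw [hsd]
        by_cases hwy : w = y
        · subst hwy
          left
          have := G.deg_mono (Finset.sdiff_subset (s := F') (t := p'.edges.toFinset)) w
          omega
        · exact hp'reg w hwD
      · intro w hwD hwz
        rw [hsd, hp'D w hwD hwz]
        exact hother w (by rintro rfl; exact hyD hwD) (by rintro rfl; exact hbD hwD)
      · rw [hsd]
        have h1 : G.deg F' z = G.deg F z :=
          hother z (by rintro rfl; exact hyD hzD) (by rintro rfl; exact hbD hzD)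
        omega

lemma sdiff_single (F : Finset E) (e : E) : F \ ({e} : Finset E) = F.erase e := by
  rw [Finset.erase_eq]

lemma extract (G : Multigraph V E) (D : Finset V) (F : Finset E)
    (hreg : ∀ w, w ∉ D → G.deg F w = 0 ∨ G.deg F w = 2)
    (x : V) (hx : x ∈ D) (hdeg : 0 < G.deg F x) :
    ∃ z ∈ D, ∃ p : G.Walk x z,
      p.edges ≠ [] ∧ p.edges.Nodup ∧ p.edges.toFinset ⊆ F ∧
      p.verts.dropLast.Nodup ∧ (x ≠ z → p.verts.Nodup) ∧
      (∀ w, w ∉ D → G.deg (F \ p.edges.toFinset) w = 0 ∨ G.deg (F \ p.edges.toFinset) w = 2) ∧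
      (∀ w ∈ D, w ≠ z → w ≠ x → G.deg (F \ p.edges.toFinset) w = G.deg F w) ∧
      (x = z → G.deg (F \ p.edges.toFinset) x + 2 = G.deg F x) ∧
      (x ≠ z → G.deg (F \ p.edges.toFinset) x + 1 = G.deg F x ∧
        G.deg (F \ p.edges.toFinset) z + 1 = G.deg F z) := by
  obtain ⟨e, heF, hxe⟩ := G.exists_edge hdeg
  obtain ⟨b, hb⟩ := Sym2.mem_iff_exists.1 hxe
  by_cases hbx : b = x
  · -- loop at x
    subst hbx
    have hFe : ((Walk.cons e hb (Walk.nil G b)).edges).toFinset = {e} := by simp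
    refine ⟨b, hx, Walk.cons e hb (Walk.nil G b), by simp, by simp, ?_, by simp, ?_, ?_, ?_, ?_, ?_⟩
    · rw [hFe]; simpa using heF
    · intro hne; exact absurd rfl hne
    · intro w hwD
      have hwx : w ≠ b := by rintro rfl; exact hwD hx
      have hc : cnt w (G.ends e) = 0 := by rw [hb]; exact cnt_ne (Ne.symm hwx) (Ne.symm hwx)
      have h1 := G.deg_erase heF w
      rw [hFe, sdiff_single]
      rcases hreg w hwD with h0 | h2
      · left; omega
      · right; omega
    · intro w hwD hwz hwx
      have hc : cnt w (G.ends e) = 0 := by rw [hb]; exact cnt_ne (Ne.symm hwx) (Ne.symm hwx)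
      have h1 := G.deg_erase heF w
      rw [hFe, sdiff_single]
      omega
    · intro _
      have h1 := G.deg_erase heF b
      rw [hb, cnt_loop] at h1
      rw [hFe, sdiff_single]
      omega
    · intro hne; exact absurd rfl hne
  · by_cases hbD : b ∈ D
    · -- single edge to b ∈ D
      have hzx : x ≠ b := Ne.symm hbx
      have hcx : cnt x (G.ends e) = 1 := by rw [hb]; exact cnt_left (Ne.symm hzx)
      have hcb : cnt b (G.ends e) = 1 := by rw [hb, Sym2.eq_swap]; exact cnt_left hzx
      have hFe : ((Walk.cons e hb (Walk.nil G b)).edges).toFinset = {e} := by simp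
      refine ⟨b, hbD, Walk.cons e hb (Walk.nil G b), by simp, by simp, ?_,
        by simp, ?_, ?_, ?_, ?_, ?_⟩
      · rw [hFe]; simpa using heF
      · intro _; simp [hzx]
      · intro w hwD
        have hwx : w ≠ x := by rintro rfl; exact hwD hx
        have hwb : w ≠ b := by rintro rfl; exact hwD hbD
        have hc : cnt w (G.ends e) = 0 := by rw [hb]; exact cnt_ne (Ne.symm hwx) (Ne.symm hwb)
        have h1 := G.deg_erase heF w
        rw [hFe, sdiff_single]
        rcases hreg w hwD with h0 | h2
        · left; omega
        · right; omega
      · intro w hwD hwz hwx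
        have hc : cnt w (G.ends e) = 0 := by rw [hb]; exact cnt_ne (Ne.symm hwx) (Ne.symm hwz)
        have h1 := G.deg_erase heF w
        rw [hFe, sdiff_single]
        omega
      · intro hxb; exact absurd hxb hzx
      · intro _
        have h1 := G.deg_erase heF x
        have h2 := G.deg_erase heF b
        rw [hFe, sdiff_single]
        omega
    · -- recurse via segment
      have hcx : cnt x (G.ends e) = 1 := by rw [hb]; exact cnt_left hbx
      have hcb : cnt b (G.ends e) = 1 := by rw [hb, Sym2.eq_swap]; exact cnt_left (Ne.symm hbx)
      set F' := F.erase e with hF'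
      have hother : ∀ w, w ≠ x → w ≠ b → G.deg F' w = G.deg F w := by
        intro w hw1 hw2
        have hc : cnt w (G.ends e) = 0 := by rw [hb]; exact cnt_ne (Ne.symm hw1) (Ne.symm hw2)
        have := G.deg_erase heF w; rw [← hF'] at this; omega
      have hdx' : G.deg F' x + 1 = G.deg F x := by
        have := G.deg_erase heF x; rw [← hF'] at this; omega
      have hdb : G.deg F b = 2 := by
        have h1 := G.cnt_le_deg heF b
        rcases hreg b hbD with h0 | h2
        · omega
        · exact h2
      have hdb' : G.deg F' b = 1 := by
        have := G.deg_erase heF b; rw [← hF'] at this; omega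
      have hreg' : ∀ w, w ∉ D → w ≠ b → G.deg F' w = 0 ∨ G.deg F' w = 2 := by
        intro w hwD hwb
        rw [hother w (by rintro rfl; exact hwD hx) hwb]
        exact hreg w hwD
      obtain ⟨z, hzD, p', hp'nodup, hp'ne, hp'enodup, hp'sub, hp'drop, hp'reg, hp'D, hp'z⟩ :=
        G.segment D F'.card F' le_rfl b hbD hdb' hreg'
      have hxp' : x ∉ p'.verts.dropLast := fun hm => (hp'drop x hm).1 hx
      have hep' : e ∉ p'.edges := by
        intro hme
        have := hp'sub (List.mem_toFinset.2 hme)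
        exact Finset.notMem_erase e F this
      set p := Walk.cons e hb p' with hp
      have hsd : F \ p.edges.toFinset = F' \ p'.edges.toFinset := by
        ext f
        simp only [hp, Walk.cons_edges, List.toFinset_cons, Finset.mem_sdiff,
          Finset.mem_insert, hF', Finset.mem_erase, List.mem_toFinset]
        constructor
        · rintro ⟨hfF, hf⟩
          push_neg at hf
          exact ⟨⟨hf.1, hfF⟩, by simpa using hf.2⟩
        · rintro ⟨⟨hfe, hfF⟩, hf⟩
          exact ⟨hfF, by push_neg; exact ⟨hfe, by simpa using hf⟩⟩
      refine ⟨z, hzD, p, by simp [hp], ?_, ?_, ?_, ?_, ?_, ?_, ?_, ?_⟩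
      · rw [hp]; simp only [Walk.cons_edges, List.nodup_cons]
        exact ⟨hep', hp'enodup⟩
      · rw [hp]; simp only [Walk.cons_edges, List.toFinset_cons]
        intro f hf
        rcases Finset.mem_insert.1 hf with rfl | hf
        · exact heF
        · exact Finset.erase_subset e F (hp'sub hf)
      · rw [hp]; simp only [Walk.cons_verts]
        rw [dropLast_cons_of_ne_nil _ p'.verts_ne_nil]
        exact List.nodup_cons.2 ⟨hxp', hp'nodup.sublist (List.dropLast_sublist _)⟩
      · intro hxz
        rw [hp]; simp only [Walk.cons_verts]
        refine List.nodup_cons.2 ⟨?_, hp'nodup⟩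
        intro hm
        rcases p'.mem_verts_cases hm with hm | rfl
        · exact hxp' hm
        · exact hxz rfl
      · intro w hwD
        rw [hsd]; exact hp'reg w hwD
      · intro w hwD hwz hwx
        rw [hsd, hp'D w hwD hwz]
        exact hother w hwx (by rintro rfl; exact hbD hwD)
      · rintro rfl
        rw [hsd]
        have := hp'z
        omega
      · intro hxz
        rw [hsd]
        constructor
        · rw [hp'D x hx hxz]
          omega
        · have h1 : G.deg F' z = G.deg F z :=
            hother z (fun h => hxz h.symm) (by rintro rfl; exact hbD hzD)
          omega

lemma Walk.verts_card {u v : V} (p : G.Walk u v) :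
    p.verts.toFinset.card ≤ p.edges.length + 1 := by
  have h1 := List.toFinset_card_le p.verts
  have h2 := p.len_eq
  omega

lemma Walk.cycle_verts_card {u : V} (c : G.Walk u u) (h : c.edges ≠ []) :
    c.verts.toFinset.card ≤ c.edges.length := by
  have hlen : c.verts.length = c.edges.length + 1 := c.len_eq
  have hpos : 0 < c.edges.length := List.length_pos_iff.2 h
  have hdl : c.verts.dropLast.length = c.edges.length := by
    rw [List.length_dropLast, hlen]; omega
  have h0lt : 0 < c.verts.dropLast.length := by omega
  have hu : u ∈ c.verts.dropLast := by
    have h0 : c.verts.dropLast[0]'h0lt = c.verts[0]'(by omega) := by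
      exact List.getElem_dropLast h0lt
    have h1 : c.verts[0]'(by omega) = u := by
      rw [List.getElem_zero]; exact c.verts_head
    have hm : c.verts.dropLast[0]'h0lt ∈ c.verts.dropLast := List.getElem_mem _
    rw [← h0] at h1
    rwa [h1] at hm
  have hsub : c.verts.toFinset ⊆ c.verts.dropLast.toFinset := by
    intro w hw
    rcases c.mem_verts_cases (List.mem_toFinset.1 hw) with hm | rfl
    · exact List.mem_toFinset.2 hm
    · exact List.mem_toFinset.2 hu
  calc c.verts.toFinset.card ≤ c.verts.dropLast.toFinset.card := Finset.card_le_card hsub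
    _ ≤ c.verts.dropLast.length := List.toFinset_card_le _
    _ = c.edges.length := hdl

lemma Walk.ends_mem {u v : V} (p : G.Walk u v) {e : E} (he : e ∈ p.edges) {w : V}
    (hw : w ∈ G.ends e) : w ∈ p.verts := by
  obtain ⟨i, hi, rfl⟩ := List.mem_iff_getElem.1 he
  rw [p.valid i hi, Sym2.mem_iff] at hw
  rcases hw with rfl | rfl
  · exact List.getElem_mem _
  · exact List.getElem_mem _

lemma close {S : Finset V} {F : Finset E} (h : G.IsMinimalBinocular S F)
    (F' : Finset E) (hF' : F' ⊆ F) (K : Finset V)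
    (hK : ∀ e ∈ F', ∀ w ∈ G.ends e, w ∈ K) (hcard : K.card < F'.card) : F' = F := by
  refine (h.2 (S ∩ K) F' Finset.inter_subset_left hF' ⟨?_, ?_⟩).2
  · intro e he w hw
    exact Finset.mem_inter.2 ⟨h.1.1 e (hF' he) w hw, hK e he w hw⟩
  · calc (S ∩ K).card ≤ K.card := Finset.card_le_card Finset.inter_subset_right
      _ < F'.card := hcard

section Setup
variable {S : Finset V} {F : Finset E} (h : G.IsMinimalBinocular S F)
include h

lemma card_F : F.card = S.card + 1 := by
  have hlt := h.1.2
  by_contra hc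
  have h2 : S.card + 2 ≤ F.card := by omega
  have hne : F.Nonempty := Finset.card_pos.1 (by omega)
  obtain ⟨e, he⟩ := hne
  have := (h.2 S (F.erase e) (le_refl S) (Finset.erase_subset e F)
    ⟨fun f hf w hw => h.1.1 f (Finset.erase_subset e F hf) w hw,
      by have := Finset.card_erase_of_mem he; omega⟩).2
  exact Finset.notMem_erase e F (by rw [this]; exact he)

lemma deg_out : ∀ v, v ∉ S → G.deg F v = 0 := by
  intro v hv
  refine Finset.sum_eq_zero fun e he => ?_
  by_contra hc
  exact hv (h.1.1 e he v ((cnt_pos_iff v (G.ends e)).1 (Nat.pos_of_ne_zero hc)))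

lemma deg_two_le : ∀ v ∈ S, 2 ≤ G.deg F v := by
  intro v hv
  by_contra hc
  push_neg at hc
  interval_cases hd : G.deg F v
  · have := (h.2 (S.erase v) F (Finset.erase_subset v S) (le_refl F)
      ⟨fun e he w hw => by
        refine Finset.mem_erase.2 ⟨?_, h.1.1 e he w hw⟩
        rintro rfl
        have := G.cnt_le_deg he w
        have := one_le_cnt hw
        omega,
       by have h1 := Finset.card_erase_of_mem hv
          have h2 : 0 < S.card := Finset.card_pos.2 ⟨v, hv⟩
          have := h.1.2; omega⟩).1
    exact Finset.notMem_erase v S (by rw [this]; exact hv)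
  · obtain ⟨e, he, hve⟩ := G.exists_edge (F := F) (v := v) (by omega)
    have := (h.2 (S.erase v) (F.erase e) (Finset.erase_subset v S) (Finset.erase_subset e F)
      ⟨fun f hf w hw => by
        refine Finset.mem_erase.2 ⟨?_, h.1.1 f (Finset.erase_subset e F hf) w hw⟩
        rintro rfl
        have h1 := G.two_cnt_le_deg (Finset.erase_subset e F hf) he
          (Finset.ne_of_mem_erase hf) w
        have h2 := one_le_cnt hw
        have h3 := one_le_cnt hve
        omega,
       by have h1 := Finset.card_erase_of_mem hv
          have h2 := Finset.card_erase_of_mem he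
          have h3 : 0 < S.card := Finset.card_pos.2 ⟨v, hv⟩
          have := h.1.2; omega⟩).1
    exact Finset.notMem_erase v S (by rw [this]; exact hv)

lemma deg_sum : ∑ v ∈ S, G.deg F v = 2 * F.card := by
  have key : ∀ s : Sym2 V, (∀ w ∈ s, w ∈ S) → ∑ v ∈ S, cnt v s = 2 := by
    intro s
    induction s using Sym2.ind with
    | _ a b =>
      intro hmem
      have ha : a ∈ S := hmem a (Sym2.mem_mk_left a b)
      have hb : b ∈ S := hmem b (Sym2.mem_mk_right a b)
      simp only [cnt_mk, Finset.sum_add_distrib, Finset.sum_ite_eq, ha, hb, if_true]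
  simp only [deg]
  rw [Finset.sum_comm]
  rw [Finset.sum_congr rfl fun e he => key (G.ends e) (h.1.1 e he)]
  rw [Finset.sum_const, smul_eq_mul]
  ring

lemma classification :
    (∃ w ∈ S, G.deg F w = 4 ∧ ∀ v ∈ S, v ≠ w → G.deg F v = 2) ∨
    (∃ u ∈ S, ∃ v ∈ S, u ≠ v ∧ G.deg F u = 3 ∧ G.deg F v = 3 ∧
      ∀ w ∈ S, w ≠ u → w ≠ v → G.deg F w = 2) := by
  classical
  set T := S.filter (fun v => 3 ≤ G.deg F v) with hT
  have hsplit := Finset.sum_filter_add_sum_filter_not S (fun v => 3 ≤ G.deg F v) (G.deg F)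
  have hnotT : ∀ v ∈ S.filter (fun v => ¬ 3 ≤ G.deg F v), G.deg F v = 2 := by
    intro v hv
    rw [Finset.mem_filter] at hv
    have := deg_two_le h v hv.1
    omega
  have hsum2 : ∑ v ∈ S.filter (fun v => ¬ 3 ≤ G.deg F v), G.deg F v
      = 2 * (S.filter (fun v => ¬ 3 ≤ G.deg F v)).card := by
    rw [Finset.sum_congr rfl hnotT, Finset.sum_const, smul_eq_mul]; ring
  have hcards := Finset.card_filter_add_card_filter_not
    (s := S) (p := fun v => 3 ≤ G.deg F v)
  have hdegsum := deg_sum h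
  have hcF := card_F h
  have hTsum : ∑ v ∈ T, G.deg F v = 2 * T.card + 2 := by
    rw [hT]
    have hle := h.1.2
    linarith
  have hT3 : ∀ v ∈ T, 3 ≤ G.deg F v := fun v hv => (Finset.mem_filter.1 hv).2
  have hTle : 3 * T.card ≤ ∑ v ∈ T, G.deg F v := by
    calc 3 * T.card = ∑ _v ∈ T, 3 := by rw [Finset.sum_const, smul_eq_mul]; ring
      _ ≤ ∑ v ∈ T, G.deg F v := Finset.sum_le_sum hT3
  have hTcard : T.card = 1 ∨ T.card = 2 := by
    rcases Nat.lt_or_ge T.card 1 with h0 | h1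
    · exfalso
      have : T = ∅ := Finset.card_eq_zero.1 (by omega)
      rw [this] at hTsum
      simp at hTsum
    · omega
  have hTsub : T ⊆ S := Finset.filter_subset _ _
  rcases hTcard with h1 | h2
  · obtain ⟨w, hw⟩ := Finset.card_eq_one.1 h1
    left
    have hwS : w ∈ S := hTsub (hw ▸ Finset.mem_singleton_self w)
    refine ⟨w, hwS, ?_, ?_⟩
    · have := hTsum
      rw [hw, Finset.sum_singleton, Finset.card_singleton] at this
      omega
    · intro v hv hvw
      have hvT : v ∉ T := by rw [hw]; simpa using hvw
      rw [hT, Finset.mem_filter] at hvT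
      have := deg_two_le h v hv
      push_neg at hvT
      have := hvT hv
      omega
  · obtain ⟨a, b, hab, hTab⟩ := Finset.card_eq_two.1 h2
    right
    have haS : a ∈ S := hTsub (hTab ▸ by simp)
    have hbS : b ∈ S := hTsub (hTab ▸ by simp)
    have hsum : G.deg F a + G.deg F b = 6 := by
      have := hTsum
      rw [hTab, Finset.sum_pair hab] at this
      have := Finset.card_pair hab
      omega
    have ha3 := hT3 a (hTab ▸ by simp)
    have hb3 := hT3 b (hTab ▸ by simp)
    refine ⟨a, haS, b, hbS, hab, by omega, by omega, ?_⟩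
    intro w hw hwa hwb
    have hwT : w ∉ T := by rw [hTab]; simp [hwa, hwb]
    rw [hT, Finset.mem_filter] at hwT
    push_neg at hwT
    have := hwT hw
    have := deg_two_le h w hw
    omega

end Setup

lemma finish_a {S : Finset V} {F : Finset E} (h : G.IsMinimalBinocular S F)
    {u v : V} (c1 : G.Walk u u) (c2 : G.Walk v v) (p : G.Walk u v)
    (hne1 : c1.edges ≠ []) (hne2 : c2.edges ≠ [])
    (hn1 : c1.edges.Nodup) (hn2 : c2.edges.Nodup) (hnp : p.edges.Nodup)
    (hs1 : c1.edges.toFinset ⊆ F) (hs2 : c2.edges.toFinset ⊆ F) (hsp : p.edges.toFinset ⊆ F)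
    (hd12 : c1.edges.Disjoint c2.edges) (hd1p : c1.edges.Disjoint p.edges)
    (hd2p : c2.edges.Disjoint p.edges) :
    (c1.edges ++ c2.edges ++ p.edges).Nodup ∧
      (c1.edges ++ c2.edges ++ p.edges).toFinset = F := by
  have hnodup : (c1.edges ++ c2.edges ++ p.edges).Nodup := by
    rw [List.append_assoc]
    refine List.nodup_append.2 ⟨hn1, List.nodup_append.2 ⟨hn2, hnp, List.disjoint_iff_ne.1 hd2p⟩, ?_⟩
    rintro a ha b hmem rfl
    rcases List.mem_append.1 hmem with h2 | h3
    · exact hd12 ha h2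
    · exact hd1p ha h3
  refine ⟨hnodup, ?_⟩
  set L := c1.edges ++ c2.edges ++ p.edges with hL
  set K := (c1.verts.toFinset ∪ p.verts.toFinset) ∪ c2.verts.toFinset with hK
  have hsubF : L.toFinset ⊆ F := by
    intro e he
    rw [List.mem_toFinset, hL] at he
    rcases List.mem_append.1 he with he | he
    · rcases List.mem_append.1 he with he | he
      · exact hs1 (List.mem_toFinset.2 he)
      · exact hs2 (List.mem_toFinset.2 he)
    · exact hsp (List.mem_toFinset.2 he)
  have hKmem : ∀ e ∈ L.toFinset, ∀ w ∈ G.ends e, w ∈ K := by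
    intro e he w hw
    rw [List.mem_toFinset, hL] at he
    rw [hK]
    rcases List.mem_append.1 he with he | he
    · rcases List.mem_append.1 he with he | he
      · exact Finset.mem_union_left _ (Finset.mem_union_left _
          (List.mem_toFinset.2 (c1.ends_mem he hw)))
      · exact Finset.mem_union_right _ (List.mem_toFinset.2 (c2.ends_mem he hw))
    · exact Finset.mem_union_left _ (Finset.mem_union_right _
        (List.mem_toFinset.2 (p.ends_mem he hw)))
  have hcardL : L.toFinset.card = c1.edges.length + c2.edges.length + p.edges.length := by
    rw [List.toFinset_card_of_nodup hnodup, hL]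
    simp [List.length_append]; omega
  have hc1card := c1.cycle_verts_card hne1
  have hc2card := c2.cycle_verts_card hne2
  have hpcard := p.verts_card
  have hA := Finset.card_union_add_card_inter c1.verts.toFinset p.verts.toFinset
  have hB := Finset.card_union_add_card_inter (c1.verts.toFinset ∪ p.verts.toFinset)
    c2.verts.toFinset
  have hu1 : 1 ≤ (c1.verts.toFinset ∩ p.verts.toFinset).card :=
    Finset.card_pos.2 ⟨u, Finset.mem_inter.2 ⟨List.mem_toFinset.2 c1.head_mem_verts,
      List.mem_toFinset.2 p.head_mem_verts⟩⟩
  have hv1 : 1 ≤ ((c1.verts.toFinset ∪ p.verts.toFinset) ∩ c2.verts.toFinset).card :=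
    Finset.card_pos.2 ⟨v, Finset.mem_inter.2
      ⟨Finset.mem_union_right _ (List.mem_toFinset.2 p.last_mem_verts),
        List.mem_toFinset.2 c2.head_mem_verts⟩⟩
  have hplen := p.len_eq
  refine close h L.toFinset hsubF K hKmem (by rw [hK, hcardL]; omega)

lemma finish_b {S : Finset V} {F : Finset E} (h : G.IsMinimalBinocular S F)
    {u v : V} (huv : u ≠ v) (p1 p2 p3 : G.Walk u v)
    (hn1 : p1.edges.Nodup) (hn2 : p2.edges.Nodup) (hn3 : p3.edges.Nodup)
    (hs1 : p1.edges.toFinset ⊆ F) (hs2 : p2.edges.toFinset ⊆ F) (hs3 : p3.edges.toFinset ⊆ F)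
    (hd12 : p1.edges.Disjoint p2.edges) (hd13 : p1.edges.Disjoint p3.edges)
    (hd23 : p2.edges.Disjoint p3.edges) :
    (p1.edges ++ p2.edges ++ p3.edges).toFinset = F := by
  have hnodup : (p1.edges ++ p2.edges ++ p3.edges).Nodup := by
    rw [List.append_assoc]
    refine List.nodup_append.2 ⟨hn1, List.nodup_append.2 ⟨hn2, hn3, List.disjoint_iff_ne.1 hd23⟩, ?_⟩
    rintro a ha b hmem rfl
    rcases List.mem_append.1 hmem with h2 | h3
    · exact hd12 ha h2
    · exact hd13 ha h3
  set L := p1.edges ++ p2.edges ++ p3.edges with hL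
  set K := (p1.verts.toFinset ∪ p2.verts.toFinset) ∪ p3.verts.toFinset with hK
  have hsubF : L.toFinset ⊆ F := by
    intro e he
    rw [List.mem_toFinset, hL] at he
    rcases List.mem_append.1 he with he | he
    · rcases List.mem_append.1 he with he | he
      · exact hs1 (List.mem_toFinset.2 he)
      · exact hs2 (List.mem_toFinset.2 he)
    · exact hs3 (List.mem_toFinset.2 he)
  have hKmem : ∀ e ∈ L.toFinset, ∀ w ∈ G.ends e, w ∈ K := by
    intro e he w hw
    rw [List.mem_toFinset, hL] at he
    rw [hK]
    rcases List.mem_append.1 he with he | he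
    · rcases List.mem_append.1 he with he | he
      · exact Finset.mem_union_left _ (Finset.mem_union_left _
          (List.mem_toFinset.2 (p1.ends_mem he hw)))
      · exact Finset.mem_union_left _ (Finset.mem_union_right _
          (List.mem_toFinset.2 (p2.ends_mem he hw)))
    · exact Finset.mem_union_right _ (List.mem_toFinset.2 (p3.ends_mem he hw))
  have hcardL : L.toFinset.card = p1.edges.length + p2.edges.length + p3.edges.length := by
    rw [List.toFinset_card_of_nodup hnodup, hL]
    simp [List.length_append]; omega
  have hp1card := p1.verts_card
  have hp2card := p2.verts_card
  have hp3card := p3.verts_card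
  have hA := Finset.card_union_add_card_inter p1.verts.toFinset p2.verts.toFinset
  have hB := Finset.card_union_add_card_inter (p1.verts.toFinset ∪ p2.verts.toFinset)
    p3.verts.toFinset
  have huv2 : ({u, v} : Finset V).card = 2 := Finset.card_pair huv
  have h12 : 2 ≤ (p1.verts.toFinset ∩ p2.verts.toFinset).card := by
    rw [← huv2]
    refine Finset.card_le_card ?_
    intro w hw
    rcases Finset.mem_insert.1 hw with rfl | hw
    · exact Finset.mem_inter.2 ⟨List.mem_toFinset.2 p1.head_mem_verts,
        List.mem_toFinset.2 p2.head_mem_verts⟩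
    · rw [Finset.mem_singleton] at hw; subst hw
      exact Finset.mem_inter.2 ⟨List.mem_toFinset.2 p1.last_mem_verts,
        List.mem_toFinset.2 p2.last_mem_verts⟩
  have h123 : 2 ≤ ((p1.verts.toFinset ∪ p2.verts.toFinset) ∩ p3.verts.toFinset).card := by
    rw [← huv2]
    refine Finset.card_le_card ?_
    intro w hw
    rcases Finset.mem_insert.1 hw with rfl | hw
    · exact Finset.mem_inter.2 ⟨Finset.mem_union_left _ (List.mem_toFinset.2 p1.head_mem_verts),
        List.mem_toFinset.2 p3.head_mem_verts⟩
    · rw [Finset.mem_singleton] at hw; subst hw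
      exact Finset.mem_inter.2 ⟨Finset.mem_union_left _ (List.mem_toFinset.2 p1.last_mem_verts),
        List.mem_toFinset.2 p3.last_mem_verts⟩
  have hl1 := p1.len_eq
  have hl2 := p2.len_eq
  have hl3 := p3.len_eq
  refine close h L.toFinset hsubF K hKmem (by rw [hK, hcardL]; omega)

end Multigraph

/-- Let `B = (S, F)` be a minimal binocular in a multigraph `G`. Then
either (a) there are (not necessarily distinct) vertices `u, v`, cycles `C_u` through `u`
and `C_v` through `v` of positive length, and a `u`-`v`-path `P` such that `E(B)` is the
disjoint union of `E(C_u)`, `E(C_v)` and `E(P)`; or (b) there are two distinct vertices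
`u ≠ v` such that `E(B)` is the union of the edge sets of three pairwise edge-disjoint
`u`-`v`-paths. -/
theorem minimal_binocular_structure {V E : Type*} [DecidableEq V] [DecidableEq E]
    (G : Multigraph V E) (S : Finset V) (F : Finset E)
    (h : G.IsMinimalBinocular S F) :
    (∃ (u v : V) (cu : G.Walk u u) (cv : G.Walk v v) (p : G.Walk u v),
        cu.IsCycle ∧ cv.IsCycle ∧ p.IsPath ∧
        (cu.edges ++ cv.edges ++ p.edges).Nodup ∧
        (cu.edges ++ cv.edges ++ p.edges).toFinset = F) ∨
    (∃ u v : V, u ≠ v ∧ ∃ p₁ p₂ p₃ : G.Walk u v,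
        p₁.IsPath ∧ p₂.IsPath ∧ p₃.IsPath ∧
        p₁.edges.Disjoint p₂.edges ∧ p₁.edges.Disjoint p₃.edges ∧
        p₂.edges.Disjoint p₃.edges ∧
        (p₁.edges ++ p₂.edges ++ p₃.edges).toFinset = F) := by
  have hout := Multigraph.deg_out h
  rcases Multigraph.classification h with ⟨w, hwS, hw4, hrest⟩ |
    ⟨u, huS, v, hvS, huv, hu3, hv3, hrest⟩
  · -- figure eight
    set D : Finset V := {w} with hD
    have hreg : ∀ t, t ∉ D → G.deg F t = 0 ∨ G.deg F t = 2 := by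
      intro t ht
      by_cases htS : t ∈ S
      · right; exact hrest t htS (by simpa [hD] using ht)
      · left; exact hout t htS
    obtain ⟨z1, hz1D, c1, hne1, hen1, hsub1, hdrop1, -, hreg1, -, hcyc1, -⟩ :=
      Multigraph.extract G D F hreg w (by simp [hD]) (by omega)
    obtain rfl : w = z1 := (Finset.mem_singleton.1 (hD ▸ hz1D)).symm
    set F2 := F \ c1.edges.toFinset with hF2
    have hdegw2 : G.deg F2 w = 2 := by have := hcyc1 rfl; omega
    obtain ⟨z2, hz2D, c2, hne2, hen2, hsub2, hdrop2, -, -, -, -, -⟩ :=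
      Multigraph.extract G D F2 hreg1 w (by simp [hD]) (by omega)
    obtain rfl : w = z2 := (Finset.mem_singleton.1 (hD ▸ hz2D)).symm
    have hs2F : c2.edges.toFinset ⊆ F := hsub2.trans (hF2 ▸ Finset.sdiff_subset)
    have hd12 : c1.edges.Disjoint c2.edges := by
      intro a ha1 ha2
      have := hsub2 (List.mem_toFinset.2 ha2)
      rw [hF2, Finset.mem_sdiff] at this
      exact this.2 (List.mem_toFinset.2 ha1)
    obtain ⟨hnodup, hfin⟩ := Multigraph.finish_a h c1 c2 (Multigraph.Walk.nil G w)
      hne1 hne2 hen1 hen2 (by simp) hsub1 hs2F (by simp)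
      hd12 (by intro a _ hmem; simp at hmem) (by intro a _ hmem; simp at hmem)
    exact Or.inl ⟨w, w, c1, c2, Multigraph.Walk.nil G w, ⟨hne1, hdrop1⟩, ⟨hne2, hdrop2⟩,
      by simp [Multigraph.Walk.IsPath], hnodup, hfin⟩
  · set D : Finset V := {u, v} with hD
    have huD : u ∈ D := by simp [hD]
    have hvD : v ∈ D := by simp [hD]
    have hreg : ∀ t, t ∉ D → G.deg F t = 0 ∨ G.deg F t = 2 := by
      intro t ht
      rw [hD, Finset.mem_insert, Finset.mem_singleton] at ht
      push_neg at ht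
      by_cases htS : t ∈ S
      · right; exact hrest t htS ht.1 ht.2
      · left; exact hout t htS
    obtain ⟨z1, hz1D, q1, hne1, hen1, hsub1, hdrop1, hpath1, hreg1, hD1, hcycdeg1, hpathdeg1⟩ :=
      Multigraph.extract G D F hreg u huD (by omega)
    have hz1 : u = z1 ∨ v = z1 := by
      rw [hD, Finset.mem_insert, Finset.mem_singleton] at hz1D
      rcases hz1D with h' | h'
      · exact Or.inl h'.symm
      · exact Or.inr h'.symm
    set F2 := F \ q1.edges.toFinset with hF2
    rcases hz1 with rfl | rfl
    · -- first extraction: cycle at u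
      have hdF2u : G.deg F2 u = 1 := by have := hcycdeg1 rfl; omega
      have hdF2v : G.deg F2 v = 3 := by rw [hD1 v hvD (Ne.symm huv) (Ne.symm huv)]; omega
      obtain ⟨z2, hz2D, q2, hne2, hen2, hsub2, hdrop2, hpath2, hreg2, hD2, hcycdeg2, hpathdeg2⟩ :=
        Multigraph.extract G D F2 hreg1 u huD (by omega)
      have hz2 : u = z2 ∨ v = z2 := by
        rw [hD, Finset.mem_insert, Finset.mem_singleton] at hz2D
        rcases hz2D with h' | h'
        · exact Or.inl h'.symm
        · exact Or.inr h'.symm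
      rcases hz2 with rfl | rfl
      · exfalso; have := hcycdeg2 rfl; omega
      set F3 := F2 \ q2.edges.toFinset with hF3
      obtain ⟨hdF3u, hdF3v⟩ := hpathdeg2 huv
      have hdF3u0 : G.deg F3 u = 0 := by omega
      have hdF3v2 : G.deg F3 v = 2 := by omega
      obtain ⟨z3, hz3D, q3, hne3, hen3, hsub3, hdrop3, hpath3, hreg3, hD3, hcycdeg3, hpathdeg3⟩ :=
        Multigraph.extract G D F3 hreg2 v hvD (by omega)
      have hz3 : u = z3 ∨ v = z3 := by
        rw [hD, Finset.mem_insert, Finset.mem_singleton] at hz3D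
        rcases hz3D with h' | h'
        · exact Or.inl h'.symm
        · exact Or.inr h'.symm
      rcases hz3 with rfl | rfl
      · exfalso
        have := (hpathdeg3 (Ne.symm huv)).2
        omega
      -- dumbbell: cycle q1 at u, path q2 u→v, cycle q3 at v
      have hsub2F : q2.edges.toFinset ⊆ F := hsub2.trans (hF2 ▸ Finset.sdiff_subset)
      have hsub3F2 : q3.edges.toFinset ⊆ F2 := hsub3.trans (hF3 ▸ Finset.sdiff_subset)
      have hsub3F : q3.edges.toFinset ⊆ F := hsub3F2.trans (hF2 ▸ Finset.sdiff_subset)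
      have hd13 : q1.edges.Disjoint q3.edges := by
        intro a ha1 ha3
        have := hsub3F2 (List.mem_toFinset.2 ha3)
        rw [hF2, Finset.mem_sdiff] at this
        exact this.2 (List.mem_toFinset.2 ha1)
      have hd12 : q1.edges.Disjoint q2.edges := by
        intro a ha1 ha2
        have := hsub2 (List.mem_toFinset.2 ha2)
        rw [hF2, Finset.mem_sdiff] at this
        exact this.2 (List.mem_toFinset.2 ha1)
      have hd32 : q3.edges.Disjoint q2.edges := by
        intro a ha3 ha2
        have := hsub3 (List.mem_toFinset.2 ha3)
        rw [hF3, Finset.mem_sdiff] at this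
        exact this.2 (List.mem_toFinset.2 ha2)
      obtain ⟨hnodup, hfin⟩ := Multigraph.finish_a h q1 q3 q2
        hne1 hne3 hen1 hen3 hen2 hsub1 hsub3F hsub2F hd13 hd12 hd32
      exact Or.inl ⟨u, v, q1, q3, q2, ⟨hne1, hdrop1⟩, ⟨hne3, hdrop3⟩,
        hpath2 huv, hnodup, hfin⟩
    · -- first extraction: path u→v
      obtain ⟨hdF2u', hdF2v'⟩ := hpathdeg1 huv
      have hdF2u : G.deg F2 u = 2 := by omega
      have hdF2v : G.deg F2 v = 2 := by omega
      obtain ⟨z2, hz2D, q2, hne2, hen2, hsub2, hdrop2, hpath2, hreg2, hD2, hcycdeg2, hpathdeg2⟩ :=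
        Multigraph.extract G D F2 hreg1 u huD (by omega)
      have hz2 : u = z2 ∨ v = z2 := by
        rw [hD, Finset.mem_insert, Finset.mem_singleton] at hz2D
        rcases hz2D with h' | h'
        · exact Or.inl h'.symm
        · exact Or.inr h'.symm
      set F3 := F2 \ q2.edges.toFinset with hF3
      have hsub2F : q2.edges.toFinset ⊆ F := hsub2.trans (hF2 ▸ Finset.sdiff_subset)
      have hsub3F2base : F3 ⊆ F2 := hF3 ▸ Finset.sdiff_subset
      rcases hz2 with rfl | rfl
      · -- second: cycle at u; third must be cycle at v
        have hdF3u : G.deg F3 u = 0 := by have := hcycdeg2 rfl; omega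
        have hdF3v : G.deg F3 v = 2 := by rw [hD2 v hvD (Ne.symm huv) (Ne.symm huv)]; omega
        obtain ⟨z3, hz3D, q3, hne3, hen3, hsub3, hdrop3, hpath3, hreg3, hD3, hcycdeg3, hpathdeg3⟩ :=
          Multigraph.extract G D F3 hreg2 v hvD (by omega)
        have hz3 : u = z3 ∨ v = z3 := by
          rw [hD, Finset.mem_insert, Finset.mem_singleton] at hz3D
          rcases hz3D with h' | h'
          · exact Or.inl h'.symm
          · exact Or.inr h'.symm
        rcases hz3 with rfl | rfl
        · exfalso
          have := (hpathdeg3 (Ne.symm huv)).2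
          omega
        have hsub3F : q3.edges.toFinset ⊆ F := (hsub3.trans hsub3F2base).trans
          (hF2 ▸ Finset.sdiff_subset)
        have hd21 : q2.edges.Disjoint q1.edges := by
          intro a ha2 ha1
          have := hsub2 (List.mem_toFinset.2 ha2)
          rw [hF2, Finset.mem_sdiff] at this
          exact this.2 (List.mem_toFinset.2 ha1)
        have hd23 : q2.edges.Disjoint q3.edges := by
          intro a ha2 ha3
          have := hsub3 (List.mem_toFinset.2 ha3)
          rw [hF3, Finset.mem_sdiff] at this
          exact this.2 (List.mem_toFinset.2 ha2)
        have hd31 : q3.edges.Disjoint q1.edges := by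
          intro a ha3 ha1
          have := (hsub3.trans hsub3F2base) (List.mem_toFinset.2 ha3)
          rw [hF2, Finset.mem_sdiff] at this
          exact this.2 (List.mem_toFinset.2 ha1)
        obtain ⟨hnodup, hfin⟩ := Multigraph.finish_a h q2 q3 q1
          hne2 hne3 hen2 hen3 hen1 hsub2F hsub3F hsub1 hd23 hd21 hd31
        exact Or.inl ⟨u, v, q2, q3, q1, ⟨hne2, hdrop2⟩, ⟨hne3, hdrop3⟩,
          hpath1 huv, hnodup, hfin⟩
      · -- theta
        obtain ⟨hdF3u', hdF3v'⟩ := hpathdeg2 huv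
        have hdF3u : G.deg F3 u = 1 := by omega
        have hdF3v : G.deg F3 v = 1 := by omega
        obtain ⟨z3, hz3D, q3, hne3, hen3, hsub3, hdrop3, hpath3, hreg3, hD3, hcycdeg3, hpathdeg3⟩ :=
          Multigraph.extract G D F3 hreg2 u huD (by omega)
        have hz3 : u = z3 ∨ v = z3 := by
          rw [hD, Finset.mem_insert, Finset.mem_singleton] at hz3D
          rcases hz3D with h' | h'
          · exact Or.inl h'.symm
          · exact Or.inr h'.symm
        rcases hz3 with rfl | rfl
        · exfalso; have := hcycdeg3 rfl; omega
        have hsub3F : q3.edges.toFinset ⊆ F := (hsub3.trans hsub3F2base).trans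
          (hF2 ▸ Finset.sdiff_subset)
        have hd12 : q1.edges.Disjoint q2.edges := by
          intro a ha1 ha2
          have := hsub2 (List.mem_toFinset.2 ha2)
          rw [hF2, Finset.mem_sdiff] at this
          exact this.2 (List.mem_toFinset.2 ha1)
        have hd13 : q1.edges.Disjoint q3.edges := by
          intro a ha1 ha3
          have := (hsub3.trans hsub3F2base) (List.mem_toFinset.2 ha3)
          rw [hF2, Finset.mem_sdiff] at this
          exact this.2 (List.mem_toFinset.2 ha1)
        have hd23 : q2.edges.Disjoint q3.edges := by
          intro a ha2 ha3
          have := hsub3 (List.mem_toFinset.2 ha3)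
          rw [hF3, Finset.mem_sdiff] at this
          exact this.2 (List.mem_toFinset.2 ha2)
        have hfin := Multigraph.finish_b h huv q1 q2 q3 hen1 hen2 hen3
          hsub1 hsub2F hsub3F hd12 hd13 hd23
        exact Or.inr ⟨u, v, huv, q1, q2, q3, hpath1 huv, hpath2 huv, hpath3 huv,
          hd12, hd13, hd23, hfin⟩
end

section
/- Let G be a graph, w: V(G) → {1,2}, A an independent set, and let D ⊆ V(G) satisfy N(V(G)\D, A) ⊆ A\D (i.e., no vertex of A ∩ D has a neighbor outside D). Then every local improvement of A\D in the induced subgraph G[V(G)\D] also constitutes a local improvement of A in G. -/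
open scoped Classical

variable {V : Type*}

/-- `N(X, A)`: the vertices of `A` that lie in `X` or are adjacent to some vertex of `X`. -/
noncomputable def nbhd (G : SimpleGraph V) (X A : Finset V) : Finset V :=
  A.filter (fun a => a ∈ X ∨ ∃ x ∈ X, G.Adj x a)

/-- Total weight of a finite vertex set. -/
noncomputable def wsum (w : V → ℕ) (X : Finset V) : ℕ := ∑ v ∈ X, w v

/-- `X` is a local improvement of `A`: it beats the weight of its neighborhood in `A`,
or ties it with strictly more weight-2 vertices. -/
def IsLocalImprovement (G : SimpleGraph V) (w : V → ℕ) (A X : Finset V) : Prop :=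
  wsum w X > wsum w (nbhd G X A) ∨
    (wsum w X = wsum w (nbhd G X A) ∧
      ((nbhd G X A).filter (fun v => w v = 2)).card < (X.filter (fun v => w v = 2)).card)

/-- Let `G` be a graph, `w : V → {1,2}`, `A` an independent set, and
`D ⊆ V` with `N(V \ D, A) ⊆ A \ D`, i.e. no vertex of `A ∩ D` has a neighbor outside
`D`.  Then every local improvement of `A \ D` in the induced subgraph `G[V \ D]`
(equivalently: every independent `X` avoiding `D` improving `A \ D`, with neighborhoods
taken in `G`, which agree with those in `G[V \ D]`) is also a local improvement of `A`
in `G`. -/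
theorem local_improvement_lifts (G : SimpleGraph V) (w : V → ℕ)
    (hw : ∀ v, w v = 1 ∨ w v = 2)
    (A D X : Finset V)
    (hA : ∀ x ∈ A, ∀ y ∈ A, ¬ G.Adj x y)
    (hX : ∀ x ∈ X, ∀ y ∈ X, ¬ G.Adj x y)
    (hXD : ∀ x ∈ X, x ∉ D)
    (hD : ∀ a ∈ A, a ∈ D → ∀ u, u ∉ D → ¬ G.Adj u a)
    (himp : IsLocalImprovement G w (A \ D) X) :
    IsLocalImprovement G w A X := by
  have key : nbhd G X A = nbhd G X (A \ D) := by
    ext a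
    simp only [nbhd, Finset.mem_filter, Finset.mem_sdiff]
    constructor
    · rintro ⟨haA, h⟩
      have haD : a ∉ D := by
        intro haD
        rcases h with haX | ⟨x, hxX, hadj⟩
        · exact hXD a haX haD
        · exact hD a haA haD x (hXD x hxX) hadj
      exact ⟨⟨haA, haD⟩, h⟩
    · rintro ⟨⟨haA, _⟩, h⟩
      exact ⟨haA, h⟩
  rwa [IsLocalImprovement, key]
end

section
/- Let G be a graph, w: V(G) → {1,2}, A ⊆ V(G) independent, τ > 0, and let B be an improving binocular in the search graph S_τ(G,w,A). Then N(W(B), A) ⊆ U(B) and w(W(B)) > w(U(B)); in particular, W(B) is a local improvement of A. -/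
open scoped Classical

variable {V : Type*}

lemma wsum_mono (w : V → ℕ) {X Y : Finset V} (h : X ⊆ Y) : wsum w X ≤ wsum w Y :=
  Finset.sum_le_sum_of_subset h

lemma wsum_union_sdiff (w : V → ℕ) (X Y : Finset V) :
    wsum w (X ∪ Y) = wsum w X + wsum w (Y \ X) := by
  rw [wsum, ← Finset.union_sdiff_self_eq_union, Finset.sum_union Finset.disjoint_sdiff]
  rfl

lemma wsum_union_le (w : V → ℕ) (X Y : Finset V) :
    wsum w (X ∪ Y) ≤ wsum w X + wsum w Y := by
  rw [wsum_union_sdiff]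
  exact add_le_add_right (wsum_mono w (Finset.sdiff_subset)) _

lemma biUnion_union_eq {ι : Type*} (s t : Finset ι) (f : ι → Finset V) :
    (s ∪ t).biUnion f = s.biUnion f ∪ t.biUnion f := by
  ext v
  simp only [Finset.mem_biUnion, Finset.mem_union]
  constructor
  · rintro ⟨ε, hε | hε, hv⟩
    · exact Or.inl ⟨ε, hε, hv⟩
    · exact Or.inr ⟨ε, hε, hv⟩
  · rintro (⟨ε, hε, hv⟩ | ⟨ε, hε, hv⟩)
    · exact ⟨ε, Or.inl hε, hv⟩
    · exact ⟨ε, Or.inr hε, hv⟩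

lemma wsum_biUnion_le {ι : Type*} (w : V → ℕ) (s : Finset ι)
    (f : ι → Finset V) : wsum w (s.biUnion f) ≤ ∑ ε ∈ s, wsum w (f ε) := by
  induction s using Finset.induction with
  | empty => simp [wsum]
  | insert _ _ h ih =>
    rw [Finset.biUnion_insert, Finset.sum_insert h]
    exact le_trans (wsum_union_le w _ _) (add_le_add_right ih _)

/-- Let `A` be independent in `(G, w)` with weights in `{1, 2}` and let
`𝓑` be an improving binocular in the search graph `S_τ(G, w, A)`.  We encode `𝓑` by a
finite family of edges indexed by `E1 ∪ E2` (loops `E1` and two-endpoint edges `E2`),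
each edge `ε` arising from an edge-inducing pair `(U ε, W ε)`; the edge associated with
`ε` is `e(ε) = N(W ε, A \ U ε)`.  Then `N(W(𝓑), A) ⊆ U(𝓑)` and
`w(W(𝓑)) > w(U(𝓑))`; in particular `W(𝓑)` is a local improvement of `A`. -/
theorem improving_binocular_is_improvement {ι : Type*}
    (G : SimpleGraph V) (w : V → ℕ) (τ : ℕ) (hτ : 0 < τ)
    (hw : ∀ v, w v = 1 ∨ w v = 2)
    (A : Finset V) (hA : ∀ x ∈ A, ∀ y ∈ A, ¬ G.Adj x y)
    (E1 E2 : Finset ι) (hE : Disjoint E1 E2)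
    (U W : ι → Finset V)
    -- each (U ε, W ε) is an edge-inducing pair:
    (hUA : ∀ ε ∈ E1 ∪ E2, U ε ⊆ A)
    (hWA : ∀ ε ∈ E1 ∪ E2, ∀ x ∈ W ε, x ∉ A)
    (hWind : ∀ ε ∈ E1 ∪ E2, ∀ x ∈ W ε, ∀ y ∈ W ε, ¬ G.Adj x y)
    (hsize : ∀ ε ∈ E1 ∪ E2, (U ε).card ≤ τ ∧ (W ε).card ≤ τ)
    (hweight : ∀ ε ∈ E1 ∪ E2, wsum w (U ε) + 2 = wsum w (W ε))
    (hedgeW2 : ∀ ε ∈ E1 ∪ E2, ∀ a ∈ nbhd G (W ε) (A \ U ε), w a = 2)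
    (hloop : ∀ ε ∈ E1, (nbhd G (W ε) (A \ U ε)).card = 1)
    (htwo : ∀ ε ∈ E2, (nbhd G (W ε) (A \ U ε)).card = 2)
    -- 𝓑 is a binocular: strictly more edges than vertices:
    (hbin : ((E1 ∪ E2).biUnion (fun ε => nbhd G (W ε) (A \ U ε))).card
              < E1.card + E2.card)
    -- 𝓑 is improving:
    (hWdisj : ∀ ε₁ ∈ E2, ∀ ε₂ ∈ E2, ε₁ ≠ ε₂ → Disjoint (W ε₁) (W ε₂))
    (hii : wsum w ((E1.biUnion U) \ (E2.biUnion U)) + 2 * E1.card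
             ≤ wsum w ((E1.biUnion W) \ (E2.biUnion W)))
    (hWBind : ∀ x ∈ (E1 ∪ E2).biUnion W, ∀ y ∈ (E1 ∪ E2).biUnion W, ¬ G.Adj x y) :
    nbhd G ((E1 ∪ E2).biUnion W) A ⊆
        (E1 ∪ E2).biUnion (fun ε => nbhd G (W ε) (A \ U ε) ∪ U ε) ∧
    wsum w ((E1 ∪ E2).biUnion (fun ε => nbhd G (W ε) (A \ U ε) ∪ U ε))
        < wsum w ((E1 ∪ E2).biUnion W) ∧
    IsLocalImprovement G w A ((E1 ∪ E2).biUnion W) := by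
  classical
  set S : Finset V := (E1 ∪ E2).biUnion (fun ε => nbhd G (W ε) (A \ U ε)) with hS
  set WB : Finset V := (E1 ∪ E2).biUnion W with hWB
  set UB : Finset V := (E1 ∪ E2).biUnion (fun ε => nbhd G (W ε) (A \ U ε) ∪ U ε) with hUB
  -- Part 1: N(WB, A) ⊆ UB
  have part1 : nbhd G WB A ⊆ UB := by
    intro a ha
    rw [nbhd, Finset.mem_filter] at ha
    obtain ⟨haA, hcase⟩ := ha
    rcases hcase with hmem | ⟨x, hx, hadj⟩
    · rcases Finset.mem_biUnion.1 hmem with ⟨ε, hε, hx⟩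
      exact absurd haA (hWA ε hε a hx)
    · rcases Finset.mem_biUnion.1 hx with ⟨ε, hε, hxW⟩
      by_cases haU : a ∈ U ε
      · exact Finset.mem_biUnion.2 ⟨ε, hε, Finset.mem_union_right _ haU⟩
      · refine Finset.mem_biUnion.2 ⟨ε, hε, Finset.mem_union_left _ ?_⟩
        rw [nbhd, Finset.mem_filter]
        exact ⟨Finset.mem_sdiff.2 ⟨haA, haU⟩, Or.inr ⟨x, hxW, hadj⟩⟩
  -- Part 2: weight inequality
  have hScard : S.card + 1 ≤ E1.card + E2.card := hbin
  have hSw : wsum w S = 2 * S.card := by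
    have h2 : ∀ v ∈ S, w v = 2 := by
      intro v hv
      rcases Finset.mem_biUnion.1 hv with ⟨ε, hε, hv⟩
      exact hedgeW2 ε hε v hv
    rw [wsum, Finset.sum_congr rfl h2, Finset.sum_const, smul_eq_mul, mul_comm]
  have hUBsub : UB ⊆ S ∪ (E1 ∪ E2).biUnion U := by
    intro a ha
    rcases Finset.mem_biUnion.1 ha with ⟨ε, hε, hmem⟩
    rcases Finset.mem_union.1 hmem with h | h
    · exact Finset.mem_union_left _ (Finset.mem_biUnion.2 ⟨ε, hε, h⟩)
    · exact Finset.mem_union_right _ (Finset.mem_biUnion.2 ⟨ε, hε, h⟩)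
  have hUU : (E1 ∪ E2).biUnion U = E2.biUnion U ∪ (E1.biUnion U) := by
    rw [biUnion_union_eq, Finset.union_comm]
  have hUUle : wsum w ((E1 ∪ E2).biUnion U)
      ≤ (∑ ε ∈ E2, wsum w (U ε)) + wsum w (E1.biUnion U \ E2.biUnion U) := by
    rw [hUU, wsum_union_sdiff]
    exact add_le_add_left (wsum_biUnion_le w E2 U) _
  have hUBle : wsum w UB + 2 ≤ 2 * (E1.card + E2.card)
      + ((∑ ε ∈ E2, wsum w (U ε)) + wsum w (E1.biUnion U \ E2.biUnion U)) := by
    have h1 : wsum w UB ≤ wsum w S + wsum w ((E1 ∪ E2).biUnion U) :=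
      le_trans (wsum_mono w hUBsub) (wsum_union_le w _ _)
    have h2 : wsum w S + 2 ≤ 2 * (E1.card + E2.card) := by
      rw [hSw]; omega
    omega
  have hW2eq : wsum w (E2.biUnion W) = (∑ ε ∈ E2, wsum w (U ε)) + 2 * E2.card := by
    have hpd : (E2 : Set ι).PairwiseDisjoint W := by
      intro ε₁ h1 ε₂ h2 hne
      exact hWdisj ε₁ h1 ε₂ h2 hne
    rw [wsum, Finset.sum_biUnion hpd]
    have : ∀ ε ∈ E2, (∑ v ∈ W ε, w v) = wsum w (U ε) + 2 := by
      intro ε hε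
      exact (hweight ε (Finset.mem_union_right _ hε)).symm
    rw [Finset.sum_congr rfl this, Finset.sum_add_distrib, Finset.sum_const,
      smul_eq_mul, mul_comm]
  have hWBeq : wsum w WB
      = wsum w (E2.biUnion W) + wsum w (E1.biUnion W \ E2.biUnion W) := by
    rw [hWB, biUnion_union_eq, Finset.union_comm, wsum_union_sdiff]
  have part2 : wsum w UB < wsum w WB := by
    have := hii
    omega
  refine ⟨part1, part2, Or.inl ?_⟩
  exact lt_of_le_of_lt (wsum_mono w part1) part2
end

section
/- Let (G,w,A,B) be a normalized instance, let (U_i,V_i,e_i)_{i∈I} be a consistent family of tail changes each of size at most N, with A_r = A \ ∪_i U_i and B_r = B \ ∪_i V_i. Let X ⊆ B_r satisfy w(X) > w(N(X,A_r)), or w(X) = w(N(X,A_r)) and |X ∩ B''| > |N(X, A_r) ∩ A''|. Then there exists a local improvement of A in G of size at most |X|·(3N+1). -/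
open scoped Classical

variable {V : Type*}

lemma mem_nbhd' {G : SimpleGraph V} {X A : Finset V} {a : V} :
    a ∈ nbhd G X A ↔ a ∈ A ∧ (a ∈ X ∨ ∃ x ∈ X, G.Adj x a) := by
  simp [nbhd]

lemma wsum_count (w : V → ℕ) (hw : ∀ v, w v = 1 ∨ w v = 2) (S : Finset V) :
    wsum w S = S.card + (S.filter (fun v => w v = 2)).card := by
  classical
  unfold wsum
  rw [← Finset.sum_filter_add_sum_filter_not S (fun v => w v = 2)]
  have h1 : ∑ v ∈ S.filter (fun v => w v = 2), w v
      = 2 * (S.filter (fun v => w v = 2)).card := by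
    rw [Finset.sum_congr rfl (fun v hv => (Finset.mem_filter.mp hv).2),
      Finset.sum_const, smul_eq_mul, mul_comm]
  have h2 : ∑ v ∈ S.filter (fun v => ¬ w v = 2), w v
      = (S.filter (fun v => ¬ w v = 2)).card := by
    have hh : ∀ v ∈ S.filter (fun v => ¬ w v = 2), w v = 1 := by
      intro v hv
      rcases hw v with h | h
      · exact h
      · exact absurd h (Finset.mem_filter.mp hv).2
    rw [Finset.sum_congr rfl hh]; simp
  have h3 := Finset.card_filter_add_card_filter_not (s := S)
    (p := fun v => w v = 2)
  omega

/-- Normalized instance `(G, w, A, B)`, consistent family of tail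
changes `(U_i, V_i, e_i)` each of size at most `N`, `A_r = A \ ⋃ U_i`,
`B_r = B \ ⋃ V_i`.  If `X ⊆ B_r` satisfies `w(X) > w(N(X, A_r))`, or
`w(X) = w(N(X, A_r))` with strictly more weight-2 vertices in `X` than in `N(X, A_r)`,
then there is a local improvement of `A` in `G` of size at most `|X| · (3N + 1)`. -/
theorem local_improvement_from_reduced {ι : Type*} [Fintype ι] [Fintype V]
    (G : SimpleGraph V) (w : V → ℕ) (hw : ∀ v, w v = 1 ∨ w v = 2)
    (A B : Finset V)
    (hV : ∀ v : V, v ∈ A ∨ v ∈ B)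
    (hAB : Disjoint A B)
    (hbip : ∀ u v : V, G.Adj u v → (u ∈ A ∧ v ∈ B) ∨ (u ∈ B ∧ v ∈ A))
    (h4claw : ¬ ∃ (c : V) (T : Finset V), T.card = 4 ∧ (∀ t ∈ T, G.Adj c t) ∧
        (∀ t₁ ∈ T, ∀ t₂ ∈ T, t₁ ≠ t₂ → ¬ G.Adj t₁ t₂))
    (h3claw : ∀ (c : V) (T : Finset V), T.card = 3 → (∀ t ∈ T, G.Adj c t) →
        (∀ t₁ ∈ T, ∀ t₂ ∈ T, t₁ ≠ t₂ → ¬ G.Adj t₁ t₂) → w c = 2)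
    (hlight : ∀ u v : V, w u = 1 → w v = 1 → ¬ G.Adj u v)
    -- consistent family of tail changes, each of size at most N
    (N : ℕ) (Ui Vi : ι → Finset V) (ei : ι → Sym2 V)
    (hUsub : ∀ i, Ui i ⊆ A) (hVsub : ∀ i, Vi i ⊆ B)
    (hcardEq : ∀ i, (Ui i).card = (Vi i).card)
    (hwEq : ∀ i, wsum w (Ui i) = wsum w (Vi i))
    (hNV : ∀ i, nbhd G (Vi i) A ⊆ Ui i)
    (hincident : ∀ i, ∃ u ∈ Ui i, u ∈ ei i)
    (hsizeN : ∀ i, (Ui i).card ≤ N)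
    (hcons : ∀ i j : ι, i ≠ j → Disjoint (Ui i) (Ui j) ∧ Disjoint (Vi i) (Vi j))
    (Ar Br : Finset V)
    (hAr : Ar = A \ Finset.univ.biUnion Ui)
    (hBr : Br = B \ Finset.univ.biUnion Vi)
    (X : Finset V) (hXsub : X ⊆ Br)
    (hX : wsum w X > wsum w (nbhd G X Ar) ∨
      (wsum w X = wsum w (nbhd G X Ar) ∧
        ((nbhd G X Ar).filter (fun v => w v = 2)).card
          < (X.filter (fun v => w v = 2)).card)) :
    ∃ Y : Finset V, Y.card ≤ X.card * (3 * N + 1) ∧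
      (∀ x ∈ Y, ∀ y ∈ Y, ¬ G.Adj x y) ∧
      IsLocalImprovement G w A Y := by
  classical
  have hBrB : Br ⊆ B := by rw [hBr]; exact Finset.sdiff_subset
  have hXB : X ⊆ B := hXsub.trans hBrB
  have hArA : Ar ⊆ A := by rw [hAr]; exact Finset.sdiff_subset
  have hBind : ∀ u ∈ B, ∀ v ∈ B, ¬ G.Adj u v := by
    intro u hu v hv hadj
    rcases hbip u v hadj with ⟨huA, _⟩ | ⟨_, hvA⟩
    · exact Finset.disjoint_left.mp hAB huA hu
    · exact Finset.disjoint_left.mp hAB hvA hv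
  have hAind : ∀ u ∈ A, ∀ v ∈ A, ¬ G.Adj u v := by
    intro u hu v hv hadj
    rcases hbip u v hadj with ⟨_, hvB⟩ | ⟨huB, _⟩
    · exact Finset.disjoint_left.mp hAB hv hvB
    · exact Finset.disjoint_left.mp hAB hu huB
  -- X is nonempty
  have hXne : X.Nonempty := by
    rcases Finset.eq_empty_or_nonempty X with h | h
    · subst h
      simp [nbhd, wsum] at hX
    · exact h
  obtain ⟨x0, hx0⟩ := hXne
  set I0 : Finset ι := Finset.univ.filter (fun i => ((Ui i) ∩ nbhd G X A).Nonempty)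
    with hI0def
  set Y : Finset V := X ∪ I0.biUnion Vi with hYdef
  have hVpd : (↑I0 : Set ι).PairwiseDisjoint Vi := fun i _ j _ hij => (hcons i j hij).2
  have hUpd : (↑I0 : Set ι).PairwiseDisjoint Ui := fun i _ j _ hij => (hcons i j hij).1
  have hXdisjV : Disjoint X (I0.biUnion Vi) := by
    rw [Finset.disjoint_left]
    intro x hxX hxV
    obtain ⟨i, _, hxi⟩ := Finset.mem_biUnion.mp hxV
    have hx := hXsub hxX
    rw [hBr, Finset.mem_sdiff] at hx
    exact hx.2 (Finset.mem_biUnion.mpr ⟨i, Finset.mem_univ i, hxi⟩)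
  have hYB : Y ⊆ B := by
    intro y hy
    rcases Finset.mem_union.mp hy with h | h
    · exact hXB h
    · obtain ⟨i, _, hyi⟩ := Finset.mem_biUnion.mp h
      exact hVsub i hyi
  -- weight-2 counts agree on U_i and V_i
  have hcnt2 : ∀ i, ((Ui i).filter (fun v => w v = 2)).card
      = ((Vi i).filter (fun v => w v = 2)).card := by
    intro i
    have h1 := wsum_count w hw (Ui i)
    have h2 := wsum_count w hw (Vi i)
    have h3 := hwEq i
    have h4 := hcardEq i
    omega
  -- lower side: Y
  have hYsum : wsum w Y = wsum w X + ∑ i ∈ I0, wsum w (Ui i) := by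
    rw [hYdef]
    unfold wsum
    rw [Finset.sum_union hXdisjV, Finset.sum_biUnion hVpd]
    congr 1
    exact Finset.sum_congr rfl fun i _ => by simpa [wsum] using (hwEq i).symm
  have hYcnt : (Y.filter (fun v => w v = 2)).card
      = (X.filter (fun v => w v = 2)).card
        + ∑ i ∈ I0, ((Ui i).filter (fun v => w v = 2)).card := by
    rw [hYdef, Finset.filter_union,
      Finset.card_union_of_disjoint (Finset.disjoint_filter_filter hXdisjV),
      Finset.filter_biUnion, Finset.card_biUnion]
    · congr 1
      exact Finset.sum_congr rfl fun i _ => (hcnt2 i).symm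
    · intro i hi j hj hij
      exact Finset.disjoint_filter_filter (hcons i j hij).2
  -- upper side: N(Y, A)
  have hNsub : nbhd G Y A ⊆ nbhd G X Ar ∪ I0.biUnion Ui := by
    intro a ha
    rw [mem_nbhd'] at ha
    obtain ⟨haA, hcase⟩ := ha
    rcases hcase with h | ⟨y, hyY, hadj⟩
    · exact absurd (hYB h) (Finset.disjoint_left.mp hAB haA)
    · rcases Finset.mem_union.mp hyY with hyX | hyV
      · by_cases hin : a ∈ Finset.univ.biUnion Ui
        · obtain ⟨i, _, hai⟩ := Finset.mem_biUnion.mp hin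
          have hiI0 : i ∈ I0 := by
            rw [hI0def, Finset.mem_filter]
            exact ⟨Finset.mem_univ i,
              ⟨a, Finset.mem_inter.mpr ⟨hai, mem_nbhd'.mpr ⟨haA, Or.inr ⟨y, hyX, hadj⟩⟩⟩⟩⟩
          exact Finset.mem_union_right _ (Finset.mem_biUnion.mpr ⟨i, hiI0, hai⟩)
        · refine Finset.mem_union_left _ (mem_nbhd'.mpr ⟨?_, Or.inr ⟨y, hyX, hadj⟩⟩)
          rw [hAr, Finset.mem_sdiff]
          exact ⟨haA, hin⟩
      · obtain ⟨i, hiI0, hyVi⟩ := Finset.mem_biUnion.mp hyV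
        have : a ∈ nbhd G (Vi i) A := mem_nbhd'.mpr ⟨haA, Or.inr ⟨y, hyVi, hadj⟩⟩
        exact Finset.mem_union_right _ (Finset.mem_biUnion.mpr ⟨i, hiI0, hNV i this⟩)
  have hSdisjU : Disjoint (nbhd G X Ar) (I0.biUnion Ui) := by
    rw [Finset.disjoint_left]
    intro a haS haU
    obtain ⟨i, _, hai⟩ := Finset.mem_biUnion.mp haU
    have := (mem_nbhd'.mp haS).1
    rw [hAr, Finset.mem_sdiff] at this
    exact this.2 (Finset.mem_biUnion.mpr ⟨i, Finset.mem_univ i, hai⟩)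
  have hNsum : wsum w (nbhd G Y A)
      ≤ wsum w (nbhd G X Ar) + ∑ i ∈ I0, wsum w (Ui i) := by
    have h1 : wsum w (nbhd G Y A) ≤ wsum w (nbhd G X Ar ∪ I0.biUnion Ui) :=
      Finset.sum_le_sum_of_subset hNsub
    have h2 : wsum w (nbhd G X Ar ∪ I0.biUnion Ui)
        = wsum w (nbhd G X Ar) + ∑ i ∈ I0, wsum w (Ui i) := by
      unfold wsum
      rw [Finset.sum_union hSdisjU, Finset.sum_biUnion hUpd]
    omega
  have hNcnt : ((nbhd G Y A).filter (fun v => w v = 2)).card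
      ≤ ((nbhd G X Ar).filter (fun v => w v = 2)).card
        + ∑ i ∈ I0, ((Ui i).filter (fun v => w v = 2)).card := by
    have h1 : ((nbhd G Y A).filter (fun v => w v = 2)).card
        ≤ (((nbhd G X Ar) ∪ I0.biUnion Ui).filter (fun v => w v = 2)).card :=
      Finset.card_le_card (Finset.filter_subset_filter _ hNsub)
    have h2 : (((nbhd G X Ar) ∪ I0.biUnion Ui).filter (fun v => w v = 2)).card
        = ((nbhd G X Ar).filter (fun v => w v = 2)).card
          + ∑ i ∈ I0, ((Ui i).filter (fun v => w v = 2)).card := by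
      rw [Finset.filter_union,
        Finset.card_union_of_disjoint (Finset.disjoint_filter_filter hSdisjU),
        Finset.filter_biUnion, Finset.card_biUnion]
      intro i hi j hj hij
      exact Finset.disjoint_filter_filter (hcons i j hij).1
    omega
  -- degree bound and |I0| ≤ 3|X|
  have hdeg : ∀ x ∈ X, (G.neighborFinset x).card ≤ 3 := by
    intro x hx
    by_contra h
    push_neg at h
    obtain ⟨T, hTsub, hTcard⟩ := Finset.exists_subset_card_eq (s := G.neighborFinset x) (n := 4) (by omega)
    refine h4claw ⟨x, T, hTcard, fun t ht => ?_, fun t1 ht1 t2 ht2 hne => ?_⟩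
    · exact (SimpleGraph.mem_neighborFinset _ _ _).mp (hTsub ht)
    · have hA1 : t1 ∈ A := by
        have hadj := (SimpleGraph.mem_neighborFinset _ _ _).mp (hTsub ht1)
        rcases hbip x t1 hadj with ⟨hxA, _⟩ | ⟨_, h⟩
        · exact absurd (hXB hx) (Finset.disjoint_left.mp hAB hxA)
        · exact h
      have hA2 : t2 ∈ A := by
        have hadj := (SimpleGraph.mem_neighborFinset _ _ _).mp (hTsub ht2)
        rcases hbip x t2 hadj with ⟨hxA, _⟩ | ⟨_, h⟩
        · exact absurd (hXB hx) (Finset.disjoint_left.mp hAB hxA)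
        · exact h
      exact hAind t1 hA1 t2 hA2
  have hI0card : I0.card ≤ 3 * X.card := by
    have hmapne : ∀ i ∈ I0, ((Ui i) ∩ nbhd G X A).Nonempty := by
      intro i hi
      exact (Finset.mem_filter.mp hi).2
    set f : ι → V := fun i =>
      if h : ((Ui i) ∩ nbhd G X A).Nonempty then h.choose else x0 with hf
    have hfmem : ∀ i ∈ I0, f i ∈ Ui i ∩ nbhd G X A := by
      intro i hi
      rw [hf]
      simp only [dif_pos (hmapne i hi)]
      exact (hmapne i hi).choose_spec
    have hmaps : ∀ i ∈ I0, f i ∈ X.biUnion (fun x => G.neighborFinset x) := by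
      intro i hi
      obtain ⟨hU, hN⟩ := Finset.mem_inter.mp (hfmem i hi)
      rw [mem_nbhd'] at hN
      obtain ⟨hA', hor⟩ := hN
      rcases hor with h | ⟨x, hxX, hadj⟩
      · exact absurd (hXB h) (Finset.disjoint_left.mp hAB hA')
      · exact Finset.mem_biUnion.mpr
          ⟨x, hxX, (SimpleGraph.mem_neighborFinset _ _ _).mpr hadj⟩
    have hinj : Set.InjOn f ↑I0 := by
      intro i hi j hj hfij
      by_contra hne
      have h1 := (Finset.mem_inter.mp (hfmem i hi)).1
      have h2 := (Finset.mem_inter.mp (hfmem j hj)).1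
      rw [hfij] at h1
      exact Finset.disjoint_left.mp (hcons i j hne).1 h1 h2
    calc I0.card ≤ (X.biUnion fun x => G.neighborFinset x).card :=
          Finset.card_le_card_of_injOn f hmaps hinj
      _ ≤ ∑ x ∈ X, (G.neighborFinset x).card := Finset.card_biUnion_le
      _ ≤ ∑ x ∈ X, 3 := Finset.sum_le_sum hdeg
      _ = 3 * X.card := by rw [Finset.sum_const, smul_eq_mul, mul_comm]
  -- cardinality bound on Y
  have hYcard : Y.card ≤ X.card * (3 * N + 1) := by
    have h1 : Y.card ≤ X.card + (I0.biUnion Vi).card := Finset.card_union_le _ _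
    have h2 : (I0.biUnion Vi).card ≤ ∑ i ∈ I0, (Vi i).card := Finset.card_biUnion_le
    have h3 : ∑ i ∈ I0, (Vi i).card ≤ I0.card * N := by
      calc ∑ i ∈ I0, (Vi i).card ≤ ∑ i ∈ I0, N :=
            Finset.sum_le_sum fun i _ => (hcardEq i) ▸ hsizeN i
        _ = I0.card * N := by rw [Finset.sum_const, smul_eq_mul]
    have h4 : I0.card * N ≤ 3 * X.card * N := Nat.mul_le_mul_right N hI0card
    nlinarith
  refine ⟨Y, hYcard, fun x hx y hy => hBind x (hYB hx) y (hYB hy), ?_⟩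
  rcases hX with h | ⟨heq, hc⟩
  · left
    rw [hYsum]
    omega
  · have hle : wsum w (nbhd G Y A) ≤ wsum w Y := by rw [hYsum]; omega
    rcases lt_or_eq_of_le hle with hlt | heq2
    · exact Or.inl hlt
    · exact Or.inr ⟨heq2.symm, by omega⟩
end

section
/- Let (S,w) be a hereditary 2-3-Set Packing instance with solutions A and B as above (A ∩ B = ∅, no local improvement of A of size ≤ 10). For each U ⊆ A there exists a collection X ⊆ S of pairwise disjoint sets such that: (i) N(X,A) ⊆ U and every set in X intersects a set of U, hence |X| ≤ 3|U|; (ii) there exists an injective map f: X → B_1 ∪ B_2 with x ⊆ f(x) for all x ∈ X; (iii) w(X) equals the total amount of weight that U receives in the first weight-distribution step. -/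
open scoped Classical

namespace SetPacking

variable {α : Type*}

/-- Weight of a set: `|s| - 1` (so 1 for 2-element sets and 2 for 3-element sets). -/
noncomputable def wt (s : Finset α) : ℕ := s.card - 1

/-- Total weight of a collection of sets. -/
noncomputable def wsum (X : Finset (Finset α)) : ℕ := ∑ s ∈ X, wt s

/-- `N(X, A)`: the sets of `A` intersecting some member of `X` (this includes `X ∩ A`
when the sets involved are nonempty). -/
noncomputable def nbhd (X A : Finset (Finset α)) : Finset (Finset α) :=
  A.filter (fun a => ∃ x ∈ X, (x ∩ a).Nonempty)

/-- A sub-collection consisting of pairwise disjoint sets. -/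
def PairwiseDisjointSets (X : Finset (Finset α)) : Prop :=
  ∀ x ∈ X, ∀ y ∈ X, x ≠ y → x ∩ y = ∅

/-- `X` is a local improvement of `A`: a disjoint sub-collection with
`w(X) > w(N(X, A))`, or equal weight and strictly more weight-2 (i.e. 3-element)
sets in `X` than in `N(X, A)`. -/
def IsLocalImprovement (A X : Finset (Finset α)) : Prop :=
  PairwiseDisjointSets X ∧
    (wsum (nbhd X A) < wsum X ∨
      (wsum X = wsum (nbhd X A) ∧
        ((nbhd X A).filter (fun s => s.card = 3)).card
          < (X.filter (fun s => s.card = 3)).card))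

/-- `B₁`: the sets of `B` with exactly one neighbor in `A` (in the conflict graph). -/
noncomputable def B1 (A B : Finset (Finset α)) : Finset (Finset α) :=
  B.filter (fun v => (A.filter (fun a => (v ∩ a).Nonempty)).card = 1)

/-- `B₂`: the weight-2 sets of `B` with exactly two incident edges in the multigraph
conflict graph (that is, `∑_{a ∈ A} |v ∩ a| = 2`), connecting to two distinct sets
of `A`. -/
noncomputable def B2 (A B : Finset (Finset α)) : Finset (Finset α) :=
  B.filter (fun v => v.card = 3 ∧ (∑ a ∈ A, (v ∩ a).card) = 2 ∧
    (A.filter (fun a => (v ∩ a).Nonempty)).card = 2)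

/-- The total amount of weight that `u` receives in the first distribution step:
each `v ∈ B₁` sends its weight `wt v` to its unique neighbor in `A`, and each
`v ∈ B₂` sends 1 along each of its two edges (one unit to each of its two
distinct neighbors in `A`). -/
noncomputable def received (A B : Finset (Finset α)) (u : Finset α) : ℕ :=
  (∑ v ∈ (B1 A B).filter (fun v => (v ∩ u).Nonempty), wt v) +
    ((B2 A B).filter (fun v => (v ∩ u).Nonempty)).card

/-- `C`: the sets of `A` receiving exactly their own weight in the first step. -/
noncomputable def Cset (A B : Finset (Finset α)) : Finset (Finset α) :=
  A.filter (fun u => received A B u = wt u)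

end SetPacking

open SetPacking

/-- Hereditary 2-3-Set Packing instance `S`, solution `A` with no
local improvement of size at most 10, optimum solution `B`, `A ∩ B = ∅`.  For each
`U ⊆ A` there is a collection `X ⊆ S` of pairwise disjoint sets such that
(i) `N(X, A) ⊆ U` and every set of `X` intersects a set of `U` (hence `|X| ≤ 3|U|`);
(ii) there is an injective map `f : X → B₁ ∪ B₂` with `x ⊆ f x` for all `x ∈ X`;
(iii) `w(X)` equals the total amount that `U` receives in the first
weight-distribution step. -/
theorem first_step_representation {α : Type*} (S A B : Finset (Finset α))
    (hcards : ∀ s ∈ S, s.card = 2 ∨ s.card = 3)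
    (hher : ∀ s ∈ S, s.card = 3 → ∀ t ⊆ s, t.card = 2 → t ∈ S)
    (hAS : A ⊆ S) (hBS : B ⊆ S)
    (hAdisj : PairwiseDisjointSets A) (hBdisj : PairwiseDisjointSets B)
    (hAB : Disjoint A B)
    (hBopt : ∀ X ⊆ S, PairwiseDisjointSets X → wsum X ≤ wsum B)
    (hnoimp : ∀ X ⊆ S, X.card ≤ 10 → ¬ IsLocalImprovement A X) :
    ∀ U ⊆ A, ∃ X : Finset (Finset α), X ⊆ S ∧ PairwiseDisjointSets X ∧
      nbhd X A ⊆ U ∧ (∀ x ∈ X, ∃ u ∈ U, (x ∩ u).Nonempty) ∧ X.card ≤ 3 * U.card ∧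
      (∃ f : Finset α → Finset α, Set.InjOn f ↑X ∧
        ∀ x ∈ X, f x ∈ B1 A B ∪ B2 A B ∧ x ⊆ f x) ∧
      wsum X = ∑ u ∈ U, received A B u := by
  intro U hU
  haveI : Nonempty (Finset α) := ⟨∅⟩
  set D : Finset α := (A \ U).biUnion id with hD
  set g : Finset α → Finset α := fun v => v \ D with hgdef
  set V1 : Finset (Finset α) :=
    (B1 A B).filter (fun v => (U.filter (fun u => (v ∩ u).Nonempty)).card = 1) with hV1
  set V2b : Finset (Finset α) :=
    (B2 A B).filter (fun v => (U.filter (fun u => (v ∩ u).Nonempty)).card = 2) with hV2b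
  set V2o : Finset (Finset α) :=
    (B2 A B).filter (fun v => (U.filter (fun u => (v ∩ u).Nonempty)).card = 1) with hV2o
  set V : Finset (Finset α) := V1 ∪ V2b ∪ V2o with hVdef
  have hgsub : ∀ v : Finset α, g v ⊆ v := by
    intro v
    show v \ D ⊆ v
    exact Finset.sdiff_subset
  have hcUA : ∀ v : Finset α, (U.filter (fun u => (v ∩ u).Nonempty)).card
      ≤ (A.filter (fun a => (v ∩ a).Nonempty)).card := fun v =>
    Finset.card_le_card (Finset.filter_subset_filter _ hU)
  have hB1cA : ∀ v ∈ B1 A B, (A.filter (fun a => (v ∩ a).Nonempty)).card = 1 :=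
    fun v hv => (Finset.mem_filter.mp hv).2
  have hB1B : ∀ v ∈ B1 A B, v ∈ B := fun v hv => (Finset.mem_filter.mp hv).1
  have hB2spec : ∀ v ∈ B2 A B, v ∈ B ∧ v.card = 3 ∧ (∑ a ∈ A, (v ∩ a).card) = 2 ∧
      (A.filter (fun a => (v ∩ a).Nonempty)).card = 2 := by
    intro v hv
    have h := Finset.mem_filter.mp hv
    exact ⟨h.1, h.2.1, h.2.2.1, h.2.2.2⟩
  have hVB : ∀ v ∈ V, v ∈ B := by
    intro v hv
    rw [hVdef] at hv
    rcases Finset.mem_union.mp hv with hv | hv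
    · rcases Finset.mem_union.mp hv with hv | hv
      · exact hB1B v (Finset.mem_of_mem_filter v (hV1 ▸ hv))
      · exact (hB2spec v (Finset.mem_of_mem_filter v (hV2b ▸ hv))).1
    · exact (hB2spec v (Finset.mem_of_mem_filter v (hV2o ▸ hv))).1
  have hV12 : ∀ v ∈ V, v ∈ B1 A B ∪ B2 A B := by
    intro v hv
    rw [hVdef] at hv
    rcases Finset.mem_union.mp hv with hv | hv
    · rcases Finset.mem_union.mp hv with hv | hv
      · exact Finset.mem_union_left _ (Finset.mem_of_mem_filter v (hV1 ▸ hv))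
      · exact Finset.mem_union_right _ (Finset.mem_of_mem_filter v (hV2b ▸ hv))
    · exact Finset.mem_union_right _ (Finset.mem_of_mem_filter v (hV2o ▸ hv))
  have hgu : ∀ v : Finset α, ∀ u ∈ U, g v ∩ u = v ∩ u := by
    intro v u hu
    ext t
    show t ∈ (v \ D) ∩ u ↔ t ∈ v ∩ u
    simp only [Finset.mem_inter, Finset.mem_sdiff]
    constructor
    · rintro ⟨⟨htv, -⟩, htu⟩; exact ⟨htv, htu⟩
    · rintro ⟨htv, htu⟩
      refine ⟨⟨htv, ?_⟩, htu⟩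
      intro htD
      rw [hD] at htD
      rcases Finset.mem_biUnion.mp htD with ⟨a, ha, hta⟩
      rcases Finset.mem_sdiff.mp ha with ⟨haA, haU⟩
      have hne : u ≠ a := fun h => haU (h ▸ hu)
      have hdisj := hAdisj u (hU hu) a haA hne
      have ht' : t ∈ u ∩ a := Finset.mem_inter.mpr ⟨htu, hta⟩
      rw [hdisj] at ht'
      exact absurd ht' (Finset.notMem_empty t)
  have hfull : ∀ v : Finset α, (U.filter (fun u => (v ∩ u).Nonempty)).card =
      (A.filter (fun a => (v ∩ a).Nonempty)).card → g v = v := by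
    intro v hv
    have heq : U.filter (fun u => (v ∩ u).Nonempty) = A.filter (fun a => (v ∩ a).Nonempty) :=
      Finset.eq_of_subset_of_card_le (Finset.filter_subset_filter _ hU) (le_of_eq hv.symm)
    show v \ D = v
    rw [sdiff_eq_left]
    rw [Finset.disjoint_left]
    intro t htv htD
    rw [hD] at htD
    rcases Finset.mem_biUnion.mp htD with ⟨a, ha, hta⟩
    rcases Finset.mem_sdiff.mp ha with ⟨haA, haU⟩
    have haF : a ∈ A.filter (fun a => (v ∩ a).Nonempty) :=
      Finset.mem_filter.mpr ⟨haA, ⟨t, Finset.mem_inter.mpr ⟨htv, hta⟩⟩⟩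
    rw [← heq] at haF
    exact haU (Finset.mem_of_mem_filter a haF)
  have hg1 : ∀ v ∈ V1, g v = v := by
    intro v hv
    rcases Finset.mem_filter.mp (hV1 ▸ hv) with ⟨hvB1, hc⟩
    exact hfull v (by rw [hc, hB1cA v hvB1])
  have hg2b : ∀ v ∈ V2b, g v = v := by
    intro v hv
    rcases Finset.mem_filter.mp (hV2b ▸ hv) with ⟨hvB2, hc⟩
    exact hfull v (by rw [hc, (hB2spec v hvB2).2.2.2])
  have h2o : ∀ v ∈ V2o, (g v).card = 2 ∧ g v ∈ S := by
    intro v hv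
    rcases Finset.mem_filter.mp (hV2o ▸ hv) with ⟨hvB2, hc1⟩
    obtain ⟨hvB, hcard3, hsum2, hcA2⟩ := hB2spec v hvB2
    obtain ⟨a₁, ha₁⟩ := Finset.card_eq_one.mp hc1
    have ha₁m : a₁ ∈ U.filter (fun u => (v ∩ u).Nonempty) := by
      rw [ha₁]; exact Finset.mem_singleton_self a₁
    rcases Finset.mem_filter.mp ha₁m with ⟨ha₁U, ha₁v⟩
    have ha₁F : a₁ ∈ A.filter (fun a => (v ∩ a).Nonempty) :=
      Finset.mem_filter.mpr ⟨hU ha₁U, ha₁v⟩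
    have hFd : ((A.filter (fun a => (v ∩ a).Nonempty)) \ {a₁}).card = 1 := by
      rw [Finset.card_sdiff_of_subset (Finset.singleton_subset_iff.mpr ha₁F), hcA2,
        Finset.card_singleton]
    obtain ⟨a₂, ha₂⟩ := Finset.card_eq_one.mp hFd
    have ha₂m : a₂ ∈ (A.filter (fun a => (v ∩ a).Nonempty)) \ {a₁} := by
      rw [ha₂]; exact Finset.mem_singleton_self a₂
    rcases Finset.mem_sdiff.mp ha₂m with ⟨ha₂F, ha₂ne⟩
    rcases Finset.mem_filter.mp ha₂F with ⟨ha₂A, ha₂v⟩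
    have ha₂ne' : a₂ ≠ a₁ := by simpa using ha₂ne
    have ha₂U : a₂ ∉ U := by
      intro h
      have hmem : a₂ ∈ U.filter (fun u => (v ∩ u).Nonempty) := Finset.mem_filter.mpr ⟨h, ha₂v⟩
      rw [ha₁] at hmem
      exact ha₂ne' (Finset.mem_singleton.mp hmem)
    have hvD : v ∩ D = v ∩ a₂ := by
      ext t
      rw [hD]
      simp only [Finset.mem_inter, Finset.mem_biUnion, Finset.mem_sdiff, id_eq]
      constructor
      · rintro ⟨htv, a, ⟨haA, haU⟩, hta⟩
        have haF : a ∈ A.filter (fun a => (v ∩ a).Nonempty) :=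
          Finset.mem_filter.mpr ⟨haA, ⟨t, Finset.mem_inter.mpr ⟨htv, hta⟩⟩⟩
        have hmem : a ∈ (A.filter (fun a => (v ∩ a).Nonempty)) \ {a₁} :=
          Finset.mem_sdiff.mpr ⟨haF, by
            simp only [Finset.mem_singleton]
            rintro rfl
            exact haU ha₁U⟩
        rw [ha₂] at hmem
        exact ⟨htv, (Finset.mem_singleton.mp hmem) ▸ hta⟩
      · rintro ⟨htv, hta⟩
        exact ⟨htv, a₂, ⟨ha₂A, ha₂U⟩, hta⟩
    have h1 : 1 ≤ (v ∩ a₁).card := Finset.card_pos.mpr ha₁v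
    have h2 : 1 ≤ (v ∩ a₂).card := Finset.card_pos.mpr ha₂v
    have hpair : (v ∩ a₁).card + (v ∩ a₂).card ≤ 2 := by
      have hsub : ({a₁, a₂} : Finset (Finset α)) ⊆ A := by
        intro a ha
        rcases Finset.mem_insert.mp ha with rfl | ha
        · exact hU ha₁U
        · exact (Finset.mem_singleton.mp ha) ▸ ha₂A
      have hle := Finset.sum_le_sum_of_subset (f := fun a => (v ∩ a).card) hsub
      rw [Finset.sum_pair (Ne.symm ha₂ne'), hsum2] at hle
      exact hle
    have hca₂ : (v ∩ a₂).card = 1 := by omega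
    have hcards' := Finset.card_sdiff_add_card_inter v D
    rw [hvD, hca₂, hcard3] at hcards'
    have hgv : (g v).card = 2 := by
      show (v \ D).card = 2
      omega
    exact ⟨hgv, hher v (hBS hvB) hcard3 _ (hgsub v) hgv⟩
  have hcVpos : ∀ v ∈ V, 1 ≤ (U.filter (fun u => (v ∩ u).Nonempty)).card := by
    intro v hv
    rw [hVdef] at hv
    rcases Finset.mem_union.mp hv with hv | hv
    · rcases Finset.mem_union.mp hv with hv | hv
      · have := (Finset.mem_filter.mp (hV1 ▸ hv)).2; omega
      · have := (Finset.mem_filter.mp (hV2b ▸ hv)).2; omega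
    · have := (Finset.mem_filter.mp (hV2o ▸ hv)).2; omega
  have hgmemU : ∀ v ∈ V, ∃ u ∈ U, ((g v) ∩ u).Nonempty := by
    intro v hv
    obtain ⟨u, hu⟩ := Finset.card_pos.mp (hcVpos v hv)
    rcases Finset.mem_filter.mp hu with ⟨huU, huv⟩
    exact ⟨u, huU, by rw [hgu v u huU]; exact huv⟩
  have hginj : ∀ v ∈ V, ∀ w ∈ V, g v = g w → v = w := by
    intro v hv w hw hgvw
    by_contra hne
    obtain ⟨u, huU, t, ht⟩ := hgmemU v hv
    have htv : t ∈ v := hgsub v (Finset.mem_inter.mp ht).1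
    have htw : t ∈ w := by
      have h1 : t ∈ g w := hgvw ▸ (Finset.mem_inter.mp ht).1
      exact hgsub w h1
    have hdisj := hBdisj v (hVB v hv) w (hVB w hw) hne
    have ht' : t ∈ v ∩ w := Finset.mem_inter.mpr ⟨htv, htw⟩
    rw [hdisj] at ht'
    exact absurd ht' (Finset.notMem_empty t)
  have hgS : ∀ v ∈ V, g v ∈ S := by
    intro v hv
    rw [hVdef] at hv
    rcases Finset.mem_union.mp hv with hv' | hv'
    · rcases Finset.mem_union.mp hv' with hv'' | hv''
      · rw [hg1 v hv'']
        exact hBS (hB1B v (Finset.mem_of_mem_filter v (hV1 ▸ hv'')))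
      · rw [hg2b v hv'']
        exact hBS ((hB2spec v (Finset.mem_of_mem_filter v (hV2b ▸ hv''))).1)
    · exact (h2o v hv').2
  have hexU : ∀ x ∈ V.image g, ∃ u ∈ U, (x ∩ u).Nonempty := by
    intro x hx
    obtain ⟨v, hv, rfl⟩ := Finset.mem_image.mp hx
    exact hgmemU v hv
  have hXdisj : PairwiseDisjointSets (V.image g) := by
    intro x hx y hy hxy
    obtain ⟨v, hv, rfl⟩ := Finset.mem_image.mp hx
    obtain ⟨w, hw, rfl⟩ := Finset.mem_image.mp hy
    have hvw : v ≠ w := fun h => hxy (by rw [h])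
    have hd := hBdisj v (hVB v hv) w (hVB w hw) hvw
    have hsub : g v ∩ g w ⊆ v ∩ w := Finset.inter_subset_inter (hgsub v) (hgsub w)
    rw [hd] at hsub
    exact Finset.subset_empty.mp hsub
  have hnb : nbhd (V.image g) A ⊆ U := by
    intro a ha
    rcases Finset.mem_filter.mp ha with ⟨haA, x, hx, hne⟩
    by_contra haU
    obtain ⟨v, hv, rfl⟩ := Finset.mem_image.mp hx
    obtain ⟨t, ht⟩ := hne
    rcases Finset.mem_inter.mp ht with ⟨htg, hta⟩
    have htD : t ∈ D := by
      rw [hD]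
      exact Finset.mem_biUnion.mpr ⟨a, Finset.mem_sdiff.mpr ⟨haA, haU⟩, hta⟩
    have hnD : t ∉ D := by
      have h1 : t ∈ v \ D := htg
      exact (Finset.mem_sdiff.mp h1).2
    exact hnD htD
  have hcard : (V.image g).card ≤ 3 * U.card := by
    rcases Finset.eq_empty_or_nonempty (V.image g) with he | ⟨x₀, hx₀⟩
    · rw [he]; simp
    · obtain ⟨u₀, hu₀, t₀, _⟩ := hexU x₀ hx₀
      haveI : Nonempty α := ⟨t₀⟩
      have hic : (V.image g).card ≤ (U.biUnion id).card := by
        set p : Finset α → α := fun x =>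
          if h : (x ∩ U.biUnion id).Nonempty then h.choose else Classical.arbitrary α with hp
        have hpmem : ∀ x ∈ V.image g, p x ∈ U.biUnion id ∧ p x ∈ x := by
          intro x hx
          obtain ⟨u, huU, t, ht⟩ := hexU x hx
          have hne : (x ∩ U.biUnion id).Nonempty := by
            refine ⟨t, Finset.mem_inter.mpr ⟨(Finset.mem_inter.mp ht).1, ?_⟩⟩
            exact Finset.mem_biUnion.mpr ⟨u, huU, (Finset.mem_inter.mp ht).2⟩
          have hpx : p x = hne.choose := by
            rw [hp]
            exact dif_pos hne
          have hspec := hne.choose_spec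
          rw [hpx]
          exact ⟨(Finset.mem_inter.mp hspec).2, (Finset.mem_inter.mp hspec).1⟩
        apply Finset.card_le_card_of_injOn p (fun x hx => (hpmem x hx).1)
        intro x hx y hy hpxy
        by_contra hne
        have hd := hXdisj x (Finset.mem_coe.mp hx) y (Finset.mem_coe.mp hy) hne
        have h1 : p x ∈ x ∩ y := Finset.mem_inter.mpr
          ⟨(hpmem x (Finset.mem_coe.mp hx)).2, hpxy ▸ (hpmem y (Finset.mem_coe.mp hy)).2⟩
        rw [hd] at h1
        exact absurd h1 (Finset.notMem_empty _)
      have h2 : (U.biUnion id).card ≤ ∑ u ∈ U, (id u).card := Finset.card_biUnion_le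
      have h3 : ∑ u ∈ U, (id u).card ≤ ∑ _u ∈ U, 3 := by
        refine Finset.sum_le_sum fun u hu => ?_
        rcases hcards u (hAS (hU hu)) with h | h <;> simp only [id_eq, h] <;> omega
      rw [Finset.sum_const, smul_eq_mul] at h3
      omega
  have hfex : ∃ f : Finset α → Finset α, Set.InjOn f ↑(V.image g) ∧
      ∀ x ∈ V.image g, f x ∈ B1 A B ∪ B2 A B ∧ x ⊆ f x := by
    have hpre : ∀ x ∈ V.image g, ∃ v ∈ (↑V : Set (Finset α)), g v = x := by
      intro x hx
      obtain ⟨v, hv, hvx⟩ := Finset.mem_image.mp hx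
      exact ⟨v, Finset.mem_coe.mpr hv, hvx⟩
    refine ⟨Function.invFunOn g ↑V, ?_, ?_⟩
    · intro x hx y hy hxy
      have hx' := Function.invFunOn_eq (hpre x (Finset.mem_coe.mp hx))
      have hy' := Function.invFunOn_eq (hpre y (Finset.mem_coe.mp hy))
      rw [← hx', ← hy', hxy]
    · intro x hx
      have hmem := Function.invFunOn_mem (hpre x hx)
      have heq := Function.invFunOn_eq (hpre x hx)
      refine ⟨hV12 _ (Finset.mem_coe.mp hmem), ?_⟩
      calc x = g (Function.invFunOn g ↑V x) := heq.symm
        _ ⊆ Function.invFunOn g ↑V x := hgsub _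
  -- weight sums
  have hB1B2 : Disjoint (B1 A B) (B2 A B) := by
    rw [Finset.disjoint_left]
    intro v h1 h2
    have e1 := hB1cA v h1
    have e2 := (hB2spec v h2).2.2.2
    omega
  have hd11 : Disjoint V1 V2b := by
    rw [hV1, hV2b]; exact Finset.disjoint_filter_filter hB1B2
  have hd12 : Disjoint V1 V2o := by
    rw [hV1, hV2o]; exact Finset.disjoint_filter_filter hB1B2
  have hdbo : Disjoint V2b V2o := by
    rw [Finset.disjoint_left]
    intro v h1 h2
    have e1 := (Finset.mem_filter.mp (hV2b ▸ h1)).2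
    have e2 := (Finset.mem_filter.mp (hV2o ▸ h2)).2
    omega
  have hduni : Disjoint (V1 ∪ V2b) V2o := Finset.disjoint_union_left.mpr ⟨hd12, hdbo⟩
  have hwt1 : ∑ v ∈ V1, wt (g v) = ∑ v ∈ V1, wt v :=
    Finset.sum_congr rfl fun v hv => by rw [hg1 v hv]
  have hwt2b : ∑ v ∈ V2b, wt (g v) = 2 * V2b.card := by
    have hconst : ∀ v ∈ V2b, wt (g v) = 2 := by
      intro v hv
      have h3 := (hB2spec v (Finset.mem_of_mem_filter v (hV2b ▸ hv))).2.1
      rw [hg2b v hv]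
      simp only [SetPacking.wt]
      omega
    rw [Finset.sum_congr rfl hconst, Finset.sum_const, smul_eq_mul, mul_comm]
  have hwt2o : ∑ v ∈ V2o, wt (g v) = V2o.card := by
    have hconst : ∀ v ∈ V2o, wt (g v) = 1 := by
      intro v hv
      have h2 := (h2o v hv).1
      simp only [SetPacking.wt]
      omega
    rw [Finset.sum_congr rfl hconst, Finset.sum_const, smul_eq_mul, mul_one]
  have hLHS : wsum (V.image g) = (∑ v ∈ V1, wt v) + (2 * V2b.card + V2o.card) := by
    rw [SetPacking.wsum, Finset.sum_image hginj, hVdef, Finset.sum_union hduni,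
      Finset.sum_union hd11, hwt1, hwt2b, hwt2o, add_assoc]
  have hRHS1 : ∑ u ∈ U, ∑ v ∈ (B1 A B).filter (fun v => (v ∩ u).Nonempty), wt v
      = ∑ v ∈ V1, wt v := by
    calc ∑ u ∈ U, ∑ v ∈ (B1 A B).filter (fun v => (v ∩ u).Nonempty), wt v
        = ∑ u ∈ U, ∑ v ∈ B1 A B, if (v ∩ u).Nonempty then wt v else 0 :=
          Finset.sum_congr rfl fun u _ => Finset.sum_filter _ _
      _ = ∑ v ∈ B1 A B, ∑ u ∈ U, if (v ∩ u).Nonempty then wt v else 0 := Finset.sum_comm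
      _ = ∑ v ∈ B1 A B, if (U.filter (fun u => (v ∩ u).Nonempty)).card = 1 then wt v else 0 := by
          refine Finset.sum_congr rfl fun v hv => ?_
          rw [← Finset.sum_filter, Finset.sum_const, smul_eq_mul]
          have hle : (U.filter (fun u => (v ∩ u).Nonempty)).card ≤ 1 := by
            have hc1 := hcUA v
            have hc2 := hB1cA v hv
            omega
          by_cases h : (U.filter (fun u => (v ∩ u).Nonempty)).card = 1
          · rw [if_pos h, h, one_mul]
          · rw [if_neg h]
            have h0 : (U.filter (fun u => (v ∩ u).Nonempty)).card = 0 := by omega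
            rw [h0, zero_mul]
      _ = ∑ v ∈ V1, wt v := by rw [hV1]; exact (Finset.sum_filter _ _).symm
  have hRHS2 : ∑ u ∈ U, ((B2 A B).filter (fun v => (v ∩ u).Nonempty)).card
      = 2 * V2b.card + V2o.card := by
    calc ∑ u ∈ U, ((B2 A B).filter (fun v => (v ∩ u).Nonempty)).card
        = ∑ u ∈ U, ∑ v ∈ B2 A B, if (v ∩ u).Nonempty then 1 else 0 :=
          Finset.sum_congr rfl fun u _ => Finset.card_filter _ _
      _ = ∑ v ∈ B2 A B, ∑ u ∈ U, if (v ∩ u).Nonempty then 1 else 0 := Finset.sum_comm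
      _ = ∑ v ∈ B2 A B, (U.filter (fun u => (v ∩ u).Nonempty)).card := by
          refine Finset.sum_congr rfl fun v hv => ?_
          rw [← Finset.sum_filter, Finset.sum_const, smul_eq_mul, mul_one]
      _ = ∑ v ∈ B2 A B, ((if (U.filter (fun u => (v ∩ u).Nonempty)).card = 2 then 2 else 0)
            + (if (U.filter (fun u => (v ∩ u).Nonempty)).card = 1 then 1 else 0)) := by
          refine Finset.sum_congr rfl fun v hv => ?_
          have hle : (U.filter (fun u => (v ∩ u).Nonempty)).card ≤ 2 := by
            have hc1 := hcUA v
            have hc2 := (hB2spec v hv).2.2.2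
            omega
          split_ifs <;> omega
      _ = (∑ v ∈ B2 A B, if (U.filter (fun u => (v ∩ u).Nonempty)).card = 2 then 2 else 0)
            + ∑ v ∈ B2 A B, if (U.filter (fun u => (v ∩ u).Nonempty)).card = 1 then 1 else 0 :=
          Finset.sum_add_distrib
      _ = 2 * V2b.card + V2o.card := by
          rw [← Finset.sum_filter, ← Finset.sum_filter, Finset.sum_const, Finset.sum_const,
            smul_eq_mul, smul_eq_mul, mul_one, hV2b, hV2o]
          omega
  have hRHS : ∑ u ∈ U, received A B u = (∑ v ∈ V1, wt v) + (2 * V2b.card + V2o.card) := by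
    simp only [SetPacking.received]
    rw [Finset.sum_add_distrib, hRHS1, hRHS2]
  refine ⟨V.image g, ?_, hXdisj, hnb, hexU, hcard, hfex, by rw [hLHS, hRHS]⟩
  intro x hx
  obtain ⟨v, hv, rfl⟩ := Finset.mem_image.mp hx
  exact hgS v hv
end
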